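/- arXiv:0906.1257 — 3 statements merged into one kernel-verified Lean document; each statement's English description precedes it below -/
import Mathlib

section
/- Let N(n) denote the number of closed orbits γ of σ on Σ_A^+ with least period |γ| ≤ n. Then, with h₀ = log(κ₀ − 1), one has N(n) ~ (e^{h₀}/(e^{h₀} − 1))·e^{h₀ n}/n as n → ∞; that is, lim_{n→∞} n·e^{−h₀ n}·N(n) = e^{h₀}/(e^{h₀} − 1). -/
/-- The one-sided shift space `Σ_A^+` of admissible sequences over `κ₀` symbols. -/
abbrev SigmaPlus (κ₀ : ℕ) : Type := {ξ : ℕ → Fin κ₀ // ∀ j : ℕ, ξ j ≠ ξ (j + 1)}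

/-- The shift map `σ` on `Σ_A^+`, `(σ ξ) j = ξ (j+1)`. -/
def shift (κ₀ : ℕ) : SigmaPlus κ₀ → SigmaPlus κ₀ :=
  fun ξ => ⟨fun j => ξ.1 (j + 1), fun j => ξ.2 (j + 1)⟩

/-- `N n` is the number of closed orbits `γ` of the shift `σ` on `Σ_A^+`
with least period `|γ| ≤ n`: an orbit is the set `{σ^[j] ξ : j ∈ ℕ}` of a
periodic point `ξ`, and its least period is `Function.minimalPeriod (shift κ₀) ξ`. -/
noncomputable def closedOrbitCount (κ₀ : ℕ) (n : ℕ) : ℕ :=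
  {O : Set (SigmaPlus κ₀) | ∃ ξ : SigmaPlus κ₀,
    1 ≤ Function.minimalPeriod (shift κ₀) ξ ∧
    Function.minimalPeriod (shift κ₀) ξ ≤ n ∧
    O = {η : SigmaPlus κ₀ | ∃ j : ℕ, (shift κ₀)^[j] ξ = η}}.ncard

namespace OB

variable {κ₀ : ℕ}

lemma shift_iterate (m : ℕ) (ξ : SigmaPlus κ₀) (j : ℕ) :
    ((shift κ₀)^[m] ξ).1 j = ξ.1 (j + m) := by
  induction m generalizing ξ j with
  | zero => simp
  | succ m ih =>
    rw [Function.iterate_succ_apply, ih]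
    show ξ.1 (j + m + 1) = _
    ring_nf

lemma periodic_add (m : ℕ) (ξ : SigmaPlus κ₀) (h : (shift κ₀)^[m] ξ = ξ) (j : ℕ) :
    ξ.1 (j + m) = ξ.1 j := by
  conv_rhs => rw [← h]
  rw [shift_iterate]

lemma periodic_mod (m : ℕ) (ξ : SigmaPlus κ₀) (h : (shift κ₀)^[m] ξ = ξ)
    (j : ℕ) : ξ.1 (j % m) = ξ.1 j := by
  induction j using Nat.strong_induction_on with
  | _ j ih =>
    rcases Nat.eq_zero_or_pos m with hm | hm
    · subst hm; simp
    rcases lt_or_ge j m with hj | hj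
    · rw [Nat.mod_eq_of_lt hj]
    · have h1 : j = (j - m) + m := by omega
      rw [h1, periodic_add m ξ h, Nat.add_mod_right]
      exact ih _ (by omega)

/-- Cyclic admissible colorings. -/
def cyc (κ₀ m : ℕ) : Type := {c : ZMod m → Fin κ₀ // ∀ j, c j ≠ c (j + 1)}

/-- Fixed points of `σ^[m]`. -/
def per (κ₀ m : ℕ) : Set (SigmaPlus κ₀) := {ξ | (shift κ₀)^[m] ξ = ξ}

lemma zmod_val_add_one (m : ℕ) [NeZero m] (j : ZMod m) :
    (j + 1).val = (j.val + 1) % m := by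
  rw [ZMod.val_add, ZMod.val_one_eq_one_mod]
  conv_lhs => rw [Nat.add_mod, Nat.mod_mod_of_dvd _ dvd_rfl]
  rw [← Nat.add_mod]

def perEquivCyc (m : ℕ) [NeZero m] : per κ₀ m ≃ cyc κ₀ m where
  toFun := fun ξp => ⟨fun j => ξp.1.1 j.val, by
    intro j
    have h1 : (j + 1).val = (j.val + 1) % m := zmod_val_add_one m j
    show ξp.1.1 j.val ≠ ξp.1.1 (j+1).val
    rw [h1, periodic_mod m ξp.1 ξp.2]
    exact ξp.1.2 j.val⟩
  invFun := fun c => ⟨⟨fun j => c.1 (j : ZMod m), by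
      intro j
      have := c.2 (j : ZMod m)
      rwa [show ((j : ZMod m) + 1) = ((j + 1 : ℕ) : ZMod m) by push_cast; ring] at this⟩, by
    show _ = _
    apply Subtype.ext; funext j
    rw [shift_iterate]
    show c.1 ((((j + m) : ℕ) : ZMod m)) = _
    push_cast
    rw [ZMod.natCast_self, add_zero]⟩
  left_inv := by
    intro ξp
    apply Subtype.ext; apply Subtype.ext; funext j
    show ξp.1.1 (((j : ZMod m)).val) = ξp.1.1 j
    rw [ZMod.val_natCast]
    exact periodic_mod m ξp.1 ξp.2 j
  right_inv := by
    intro c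
    apply Subtype.ext; funext j
    show c.1 ((j.val : ZMod m)) = c.1 j
    rw [ZMod.natCast_rightInverse j]

/-- Admissible paths with `m+1` vertices. -/
def pathT (κ₀ m : ℕ) : Type :=
  {c : Fin (m + 1) → Fin κ₀ // ∀ i : Fin m, c i.castSucc ≠ c i.succ}

instance (κ₀ m : ℕ) [NeZero m] : Finite (cyc κ₀ m) :=
  Finite.of_injective (fun c : cyc κ₀ m => c.1) (fun _ _ hab => Subtype.ext hab)

instance (κ₀ m : ℕ) : Finite (pathT κ₀ m) :=
  Finite.of_injective (fun c : pathT κ₀ m => c.1) (fun _ _ hab => Subtype.ext hab)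

def pathSnoc (κ₀ m : ℕ) :
    (Σ c : pathT κ₀ m, {x : Fin κ₀ // x ≠ c.1 (Fin.last m)}) → pathT κ₀ (m + 1) :=
  fun p => ⟨Fin.snoc p.1.1 p.2.1, by
    intro i
    induction i using Fin.lastCases with
    | last =>
      rw [Fin.succ_last, Fin.snoc_last, Fin.snoc_castSucc]
      exact fun h => p.2.2 h.symm
    | cast j =>
      rw [Fin.succ_castSucc, Fin.snoc_castSucc, Fin.snoc_castSucc]
      exact p.1.2 j⟩

lemma pathSnoc_bijective (κ₀ m : ℕ) : Function.Bijective (pathSnoc κ₀ m) := by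
  constructor
  · rintro ⟨c, x⟩ ⟨c', x'⟩ h
    have h1 : (Fin.snoc c.1 x.1 : Fin (m + 2) → Fin κ₀) = Fin.snoc c'.1 x'.1 :=
      congrArg Subtype.val h
    have hc : c = c' := by
      apply Subtype.ext
      have := congrArg Fin.init h1
      rwa [Fin.init_snoc, Fin.init_snoc] at this
    subst hc
    have hx : x = x' := by
      apply Subtype.ext
      have := congrFun h1 (Fin.last (m + 1))
      rwa [Fin.snoc_last, Fin.snoc_last] at this
    rw [hx]
  · intro d
    refine ⟨⟨⟨Fin.init d.1, fun i => by
        have h2 := d.2 i.castSucc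
        rwa [Fin.succ_castSucc] at h2⟩,
      ⟨d.1 (Fin.last (m + 1)), fun h => ?_⟩⟩, ?_⟩
    · have h2 := d.2 (Fin.last m)
      rw [Fin.succ_last] at h2
      exact h2 h.symm
    · apply Subtype.ext
      exact Fin.snoc_init_self d.1

lemma card_pathT (κ₀ m : ℕ) : Nat.card (pathT κ₀ m) = κ₀ * (κ₀ - 1) ^ m := by
  induction m with
  | zero =>
    have e : pathT κ₀ 0 ≃ Fin κ₀ :=
      { toFun := fun c => c.1 0
        invFun := fun x => ⟨fun _ => x, fun i => i.elim0⟩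
        left_inv := fun c => by
          apply Subtype.ext; funext j
          have hj : j = 0 := Fin.ext (by omega)
          rw [hj]
        right_inv := fun x => rfl }
    rw [Nat.card_congr e]
    simp
  | succ m ih =>
    classical
    rw [← Nat.card_congr (Equiv.ofBijective _ (pathSnoc_bijective κ₀ m))]
    haveI := Fintype.ofFinite (pathT κ₀ m)
    haveI : ∀ c : pathT κ₀ m, Fintype {x : Fin κ₀ // x ≠ c.1 (Fin.last m)} := fun c =>
      Fintype.ofFinite _
    haveI : Fintype (Σ c : pathT κ₀ m, {x : Fin κ₀ // x ≠ c.1 (Fin.last m)}) :=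
      Fintype.ofFinite _
    rw [Nat.card_eq_fintype_card]
    have hfib : ∀ c : pathT κ₀ m, Fintype.card {x : Fin κ₀ // x ≠ c.1 (Fin.last m)} = κ₀ - 1 := by
      intro c
      have h1 : Fintype.card {x : Fin κ₀ // ¬(x = c.1 (Fin.last m))} =
          Fintype.card (Fin κ₀) - Fintype.card {x : Fin κ₀ // x = c.1 (Fin.last m)} :=
        Fintype.card_subtype_compl _
      simpa [Fintype.card_subtype_eq] using h1
    calc Fintype.card (Σ c : pathT κ₀ m, {x : Fin κ₀ // x ≠ c.1 (Fin.last m)})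
        = ∑ c : pathT κ₀ m, Fintype.card {x : Fin κ₀ // x ≠ c.1 (Fin.last m)} := by
          convert Fintype.card_sigma <;> exact Subsingleton.elim _ _
      _ = ∑ _c : pathT κ₀ m, (κ₀ - 1) := Finset.sum_congr rfl (fun c _ => hfib c)
      _ = Fintype.card (pathT κ₀ m) * (κ₀ - 1) := by
          rw [Finset.sum_const, Finset.card_univ, smul_eq_mul]
      _ = κ₀ * (κ₀ - 1) ^ m * (κ₀ - 1) := by rw [← Nat.card_eq_fintype_card, ih]
      _ = κ₀ * (κ₀ - 1) ^ (m + 1) := by ring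

/-- Paths whose endpoints differ are in bijection with cyclic colorings on `m+1` vertices. -/
def cycSuccToPath (κ₀ m : ℕ) :
    cyc κ₀ (m + 1) → {c : pathT κ₀ m // c.1 (Fin.last m) ≠ c.1 0} :=
  fun d => ⟨⟨fun j => d.1 ((j.val : ZMod (m + 1))), by
    intro i
    have h := d.2 ((i.val : ZMod (m + 1)))
    show d.1 (((i.castSucc.val : ℕ) : ZMod (m + 1))) ≠ d.1 (((i.succ.val : ℕ) : ZMod (m + 1)))
    rw [Fin.coe_castSucc, Fin.val_succ]
    push_cast
    exact h⟩, by
    show d.1 (((Fin.last m).val : ZMod (m + 1))) ≠ d.1 (((0 : Fin (m + 1)).val : ZMod (m + 1)))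
    have h := d.2 ((m : ZMod (m + 1)))
    rw [show ((m : ZMod (m + 1)) + 1) = ((m + 1 : ℕ) : ZMod (m + 1)) by push_cast; ring,
      ZMod.natCast_self] at h
    simpa using h⟩

lemma cycSuccToPath_bijective (κ₀ m : ℕ) : Function.Bijective (cycSuccToPath κ₀ m) := by
  constructor
  · intro d d' h
    apply Subtype.ext; funext k
    have h1 : ∀ j : Fin (m + 1), d.1 ((j.val : ZMod (m + 1))) = d'.1 ((j.val : ZMod (m + 1))) :=
      fun j => congrFun (congrArg Subtype.val (congrArg Subtype.val h)) j
    have h2 := h1 ⟨k.val, ZMod.val_lt k⟩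
    simpa [ZMod.natCast_rightInverse k] using h2
  · intro c
    have hmem : ∀ k : ZMod (m + 1), k.val < m + 1 := fun k => ZMod.val_lt k
    refine ⟨⟨fun k => c.1.1 ⟨k.val, hmem k⟩, ?_⟩, ?_⟩
    · intro k
      show c.1.1 ⟨k.val, hmem k⟩ ≠ c.1.1 ⟨(k + 1).val, hmem (k + 1)⟩
      have e0 : (⟨(k + 1).val, hmem (k + 1)⟩ : Fin (m + 1)) =
          ⟨(k.val + 1) % (m + 1), Nat.mod_lt _ (Nat.succ_pos m)⟩ :=
        Fin.ext (zmod_val_add_one (m + 1) k)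
      rcases lt_or_ge k.val m with hk | hk
      · have h := c.1.2 ⟨k.val, hk⟩
        have e1 : ((⟨k.val, hk⟩ : Fin m).castSucc) = (⟨k.val, hmem k⟩ : Fin (m + 1)) :=
          Fin.ext rfl
        have e2 : ((⟨k.val, hk⟩ : Fin m).succ) =
            (⟨(k.val + 1) % (m + 1), Nat.mod_lt _ (Nat.succ_pos m)⟩ : Fin (m + 1)) :=
          Fin.ext (by simp [Nat.mod_eq_of_lt (by omega : k.val + 1 < m + 1)])
        exact fun hEq => h ((congrArg c.1.1 e1).trans
          (hEq.trans ((congrArg c.1.1 e0).trans (congrArg c.1.1 e2.symm))))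
      · have hk' : k.val = m := by have := ZMod.val_lt k; omega
        have h := c.2
        have e1 : (⟨k.val, hmem k⟩ : Fin (m + 1)) = Fin.last m := Fin.ext (by simpa using hk')
        have e2 : (⟨(k + 1).val, hmem (k + 1)⟩ : Fin (m + 1)) = (0 : Fin (m + 1)) := by
          refine e0.trans (Fin.ext ?_)
          show (k.val + 1) % (m + 1) = 0
          rw [hk', Nat.mod_self]
        exact fun hEq => h ((congrArg c.1.1 e1.symm).trans (hEq.trans (congrArg c.1.1 e2)))
    · apply Subtype.ext; apply Subtype.ext; funext j
      show c.1.1 ⟨((j.val : ℕ) : ZMod (m + 1)).val, hmem _⟩ = c.1.1 j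
      have hval : ((j.val : ℕ) : ZMod (m + 1)).val = j.val := by
        rw [ZMod.val_natCast]; exact Nat.mod_eq_of_lt j.isLt
      exact congrArg c.1.1 (Fin.ext hval)

/-- Paths whose endpoints agree are in bijection with cyclic colorings on `m` vertices
(for `m ≥ 1`). -/
def cycToPathEq (κ₀ m : ℕ) [NeZero m] :
    cyc κ₀ m → {c : pathT κ₀ m // c.1 (Fin.last m) = c.1 0} :=
  fun d => ⟨⟨fun j => d.1 ((j.val : ZMod m)), by
    intro i
    have h := d.2 ((i.val : ZMod m))
    show d.1 (((i.castSucc.val : ℕ) : ZMod m)) ≠ d.1 (((i.succ.val : ℕ) : ZMod m))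
    rw [Fin.coe_castSucc, Fin.val_succ]
    push_cast
    exact h⟩, by
    show d.1 (((Fin.last m).val : ZMod m)) = d.1 (((0 : Fin (m + 1)).val : ZMod m))
    rw [Fin.val_last, ZMod.natCast_self]
    simp⟩

lemma cycToPathEq_bijective (κ₀ m : ℕ) [NeZero m] : Function.Bijective (cycToPathEq κ₀ m) := by
  have hm : 1 ≤ m := Nat.one_le_iff_ne_zero.mpr (NeZero.ne m)
  constructor
  · intro d d' h
    apply Subtype.ext; funext k
    have h1 : ∀ j : Fin (m + 1), d.1 ((j.val : ZMod m)) = d'.1 ((j.val : ZMod m)) :=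
      fun j => congrFun (congrArg Subtype.val (congrArg Subtype.val h)) j
    have h2 := h1 ⟨k.val, by have := ZMod.val_lt k; omega⟩
    simpa [ZMod.natCast_rightInverse k] using h2
  · intro c
    have hmem : ∀ k : ZMod m, k.val < m + 1 := fun k => by have := ZMod.val_lt k; omega
    refine ⟨⟨fun k => c.1.1 ⟨k.val, hmem k⟩, ?_⟩, ?_⟩
    · intro k
      show c.1.1 ⟨k.val, hmem k⟩ ≠ c.1.1 ⟨(k + 1).val, hmem (k + 1)⟩
      have hkm := ZMod.val_lt k
      have e0 : (⟨(k + 1).val, hmem (k + 1)⟩ : Fin (m + 1)) =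
          ⟨(k.val + 1) % m, by have := Nat.mod_lt (k.val + 1) (show 0 < m by omega); omega⟩ :=
        Fin.ext (zmod_val_add_one m k)
      rcases lt_or_ge (k.val + 1) m with hk | hk
      · have h := c.1.2 ⟨k.val, by omega⟩
        have e1 : ((⟨k.val, by omega⟩ : Fin m).castSucc) = (⟨k.val, hmem k⟩ : Fin (m + 1)) :=
          Fin.ext rfl
        have e2 : ((⟨k.val, by omega⟩ : Fin m).succ) =
            (⟨(k + 1).val, hmem (k + 1)⟩ : Fin (m + 1)) := by
          refine Fin.ext ?_ |>.trans e0.symm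
          show k.val + 1 = (k.val + 1) % m
          rw [Nat.mod_eq_of_lt hk]
        exact fun hEq => h ((congrArg c.1.1 e1).trans (hEq.trans (congrArg c.1.1 e2.symm)))
      · have hk' : k.val = m - 1 := by omega
        have h := c.1.2 ⟨m - 1, by omega⟩
        have e1 : ((⟨m - 1, by omega⟩ : Fin m).castSucc) = (⟨k.val, hmem k⟩ : Fin (m + 1)) :=
          Fin.ext (by simp [hk'])
        have e2 : ((⟨m - 1, by omega⟩ : Fin m).succ) = Fin.last m := Fin.ext (by simp; omega)
        have e3 : (⟨(k + 1).val, hmem (k + 1)⟩ : Fin (m + 1)) = (0 : Fin (m + 1)) := by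
          refine e0.trans (Fin.ext ?_)
          show (k.val + 1) % m = 0
          rw [show k.val + 1 = m by omega, Nat.mod_self]
        -- h : c (castSucc ⟨m-1⟩) ≠ c (succ ⟨m-1⟩) = c (last m) = c 0
        intro hEq
        apply h
        calc c.1.1 ((⟨m - 1, by omega⟩ : Fin m).castSucc)
            = c.1.1 ⟨k.val, hmem k⟩ := congrArg c.1.1 e1
          _ = c.1.1 ⟨(k + 1).val, hmem (k + 1)⟩ := hEq
          _ = c.1.1 (0 : Fin (m + 1)) := congrArg c.1.1 e3
          _ = c.1.1 (Fin.last m) := c.2.symm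
          _ = c.1.1 ((⟨m - 1, by omega⟩ : Fin m).succ) := congrArg c.1.1 e2.symm
    · apply Subtype.ext; apply Subtype.ext; funext j
      show c.1.1 ⟨((j.val : ℕ) : ZMod m).val, hmem _⟩ = c.1.1 j
      rcases lt_or_ge j.val m with hj | hj
      · have hval : ((j.val : ℕ) : ZMod m).val = j.val := by
          rw [ZMod.val_natCast]; exact Nat.mod_eq_of_lt hj
        exact congrArg c.1.1 (Fin.ext hval)
      · have hj' : j.val = m := by omega
        have e1 : (⟨((j.val : ℕ) : ZMod m).val, hmem _⟩ : Fin (m + 1)) = (0 : Fin (m + 1)) := by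
          apply Fin.ext
          show ((j.val : ℕ) : ZMod m).val = 0
          rw [ZMod.val_natCast, hj', Nat.mod_self]
        have e2 : j = Fin.last m := Fin.ext (by simpa using hj')
        calc c.1.1 ⟨((j.val : ℕ) : ZMod m).val, hmem _⟩
            = c.1.1 (0 : Fin (m + 1)) := congrArg c.1.1 e1
          _ = c.1.1 (Fin.last m) := c.2.symm
          _ = c.1.1 j := congrArg c.1.1 e2.symm

lemma card_cyc_one (κ₀ : ℕ) : Nat.card (cyc κ₀ 1) = 0 := by
  have : IsEmpty (cyc κ₀ 1) := by
    constructor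
    intro c
    have h := c.2 0
    apply h
    congr 1
  simp

lemma card_cyc_rec (κ₀ m : ℕ) (hm : 1 ≤ m) :
    Nat.card (cyc κ₀ (m + 1)) + Nat.card (cyc κ₀ m) = κ₀ * (κ₀ - 1) ^ m := by
  classical
  haveI : NeZero m := ⟨by omega⟩
  have e1 : Nat.card (cyc κ₀ (m + 1)) =
      Nat.card {c : pathT κ₀ m // c.1 (Fin.last m) ≠ c.1 0} :=
    Nat.card_congr (Equiv.ofBijective _ (cycSuccToPath_bijective κ₀ m))
  have e2 : Nat.card (cyc κ₀ m) = Nat.card {c : pathT κ₀ m // c.1 (Fin.last m) = c.1 0} :=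
    Nat.card_congr (Equiv.ofBijective _ (cycToPathEq_bijective κ₀ m))
  rw [e1, e2, ← card_pathT κ₀ m, add_comm]
  rw [← Nat.card_sum]
  exact Nat.card_congr (Equiv.sumCompl (fun c : pathT κ₀ m => c.1 (Fin.last m) = c.1 0))

lemma card_cyc_formula (κ₀ : ℕ) (hκ : 3 ≤ κ₀) (m : ℕ) (hm : 1 ≤ m) :
    (Nat.card (cyc κ₀ m) : ℝ) = ((κ₀ : ℝ) - 1) ^ m + ((κ₀ : ℝ) - 1) * (-1) ^ m := by
  induction m, hm using Nat.le_induction with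
  | base => rw [card_cyc_one]; push_cast; ring
  | succ m hm ih =>
    have hrec := card_cyc_rec κ₀ m hm
    have hcast : (Nat.card (cyc κ₀ (m + 1)) : ℝ) + (Nat.card (cyc κ₀ m) : ℝ) =
        (κ₀ : ℝ) * ((κ₀ : ℝ) - 1) ^ m := by
      have := congrArg (fun x : ℕ => (x : ℝ)) hrec
      push_cast [Nat.cast_sub (by omega : 1 ≤ κ₀)] at this
      simpa using this
    have : (Nat.card (cyc κ₀ (m + 1)) : ℝ) =
        (κ₀ : ℝ) * ((κ₀ : ℝ) - 1) ^ m - (Nat.card (cyc κ₀ m) : ℝ) := by linarith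
    rw [this, ih]
    ring

open Function Set

variable (κ₀ : ℕ)

lemma per_finite (m : ℕ) (hm : 1 ≤ m) : (per κ₀ m).Finite := by
  haveI : NeZero m := ⟨by omega⟩
  haveI : Finite (per κ₀ m) := Finite.of_equiv _ (perEquivCyc (κ₀ := κ₀) m).symm
  exact Set.finite_coe_iff.mp inferInstance

lemma ncard_per (hκ : 3 ≤ κ₀) (m : ℕ) (hm : 1 ≤ m) :
    ((per κ₀ m).ncard : ℝ) = ((κ₀ : ℝ) - 1) ^ m + ((κ₀ : ℝ) - 1) * (-1) ^ m := by
  haveI : NeZero m := ⟨by omega⟩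
  rw [← Nat.card_coe_set_eq, Nat.card_congr (perEquivCyc (κ₀ := κ₀) m)]
  exact card_cyc_formula κ₀ hκ m hm

/-- Points of minimal period `d`. -/
def mset (d : ℕ) : Set (SigmaPlus κ₀) := {ξ | Function.minimalPeriod (shift κ₀) ξ = d}

lemma mset_subset_per (d : ℕ) : mset κ₀ d ⊆ per κ₀ d := by
  intro ξ hξ
  have h := Function.isPeriodicPt_minimalPeriod (shift κ₀) ξ
  rw [hξ] at h
  exact h

lemma mset_finite (d : ℕ) (hd : 1 ≤ d) : (mset κ₀ d).Finite :=
  (per_finite κ₀ d hd).subset (mset_subset_per κ₀ d)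

lemma per_subset_union (m : ℕ) (hm : 1 ≤ m) :
    per κ₀ m ⊆ mset κ₀ m ∪ ⋃ d ∈ Finset.Icc 1 (m / 2), per κ₀ d := by
  intro ξ hξ
  have hper : Function.IsPeriodicPt (shift κ₀) m ξ := hξ
  have hdvd : Function.minimalPeriod (shift κ₀) ξ ∣ m := hper.minimalPeriod_dvd
  set d := Function.minimalPeriod (shift κ₀) ξ with hd
  have hd1 : 1 ≤ d := by
    rcases Nat.eq_zero_or_pos d with h0 | h0
    · exfalso; rw [h0] at hdvd; omega
    · exact h0
  rcases eq_or_ne d m with he | he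
  · left; exact he
  · right
    have hlt : d < m := Nat.lt_of_le_of_ne (Nat.le_of_dvd (by omega) hdvd) he
    have hhalf : d ≤ m / 2 := by
      obtain ⟨k, hk⟩ := hdvd
      have hk2 : 2 ≤ k := by
        rcases Nat.lt_or_ge k 2 with h | h
        · interval_cases k <;> omega
        · exact h
      have : 2 * d ≤ m := by nlinarith
      omega
    refine Set.mem_biUnion (Finset.mem_Icc.mpr ⟨hd1, hhalf⟩) ?_
    exact Function.isPeriodicPt_minimalPeriod (shift κ₀) ξ

lemma ncard_biUnion_le {ι α : Type*} (t : Finset ι) (S : ι → Set α) :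
    (⋃ i ∈ t, S i).ncard ≤ ∑ i ∈ t, (S i).ncard := by
  classical
  induction t using Finset.induction with
  | empty => simp
  | insert a t' hx ih =>
    rw [Finset.sum_insert hx]
    refine le_trans (le_of_eq (by rw [Finset.set_biUnion_insert])) ?_
    exact le_trans (Set.ncard_union_le _ _) (by omega)

lemma ncard_per_le (m : ℕ) (hm : 1 ≤ m) :
    (per κ₀ m).ncard ≤ (mset κ₀ m).ncard + ∑ d ∈ Finset.Icc 1 (m / 2), (per κ₀ d).ncard := by
  refine le_trans (Set.ncard_le_ncard (per_subset_union κ₀ m hm) ?_) ?_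
  · refine Set.Finite.union (mset_finite κ₀ m hm) ?_
    refine Set.Finite.biUnion (Finset.finite_toSet _) ?_
    intro d hd
    simp only [Finset.coe_Icc, Set.mem_Icc] at hd
    exact per_finite κ₀ d hd.1
  · exact le_trans (Set.ncard_union_le _ _) (by
      have := ncard_biUnion_le (Finset.Icc 1 (m / 2)) (fun d => per κ₀ d)
      omega)

/-- The forward orbit. -/
def orb (ξ : SigmaPlus κ₀) : Set (SigmaPlus κ₀) := {η | ∃ j, (shift κ₀)^[j] ξ = η}

lemma self_mem_orb (ξ : SigmaPlus κ₀) : ξ ∈ orb κ₀ ξ := ⟨0, rfl⟩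

lemma iterate_mem_orb (ξ : SigmaPlus κ₀) (j : ℕ) : (shift κ₀)^[j] ξ ∈ orb κ₀ ξ := ⟨j, rfl⟩

lemma orb_eq_image (ξ : SigmaPlus κ₀) (hξ : 1 ≤ Function.minimalPeriod (shift κ₀) ξ) :
    orb κ₀ ξ = (fun j => (shift κ₀)^[j] ξ) '' ↑(Finset.range (Function.minimalPeriod (shift κ₀) ξ)) := by
  ext η
  constructor
  · rintro ⟨j, rfl⟩
    refine ⟨j % Function.minimalPeriod (shift κ₀) ξ, ?_, ?_⟩
    · simp only [Finset.coe_range, Set.mem_Iio]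
      exact Nat.mod_lt _ (by omega)
    · exact Function.iterate_mod_minimalPeriod_eq
  · rintro ⟨j, _, rfl⟩
    exact ⟨j, rfl⟩

lemma ncard_orb (ξ : SigmaPlus κ₀) (hξ : 1 ≤ Function.minimalPeriod (shift κ₀) ξ) :
    (orb κ₀ ξ).ncard = Function.minimalPeriod (shift κ₀) ξ := by
  rw [orb_eq_image κ₀ ξ hξ, Set.ncard_image_of_injOn, Set.ncard_coe_finset, Finset.card_range]
  intro a ha b hb hab
  simp only [Finset.coe_range, Set.mem_Iio] at ha hb
  exact Function.iterate_injOn_Iio_minimalPeriod ha hb hab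

lemma orb_finite (ξ : SigmaPlus κ₀) (hξ : 1 ≤ Function.minimalPeriod (shift κ₀) ξ) :
    (orb κ₀ ξ).Finite := by
  rw [orb_eq_image κ₀ ξ hξ]
  exact Set.Finite.image _ (Finset.finite_toSet _)

lemma minper_of_mem_orb (ξ η : SigmaPlus κ₀) (hξ : 1 ≤ Function.minimalPeriod (shift κ₀) ξ)
    (hη : η ∈ orb κ₀ ξ) :
    Function.minimalPeriod (shift κ₀) η = Function.minimalPeriod (shift κ₀) ξ := by
  obtain ⟨j, rfl⟩ := hη
  exact Function.minimalPeriod_apply_iterate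
    (Function.minimalPeriod_pos_iff_mem_periodicPts.mp (by omega)) j

lemma iterate_eq_of_modEq (ξ : SigmaPlus κ₀) {a b : ℕ}
    (h : a ≡ b [MOD Function.minimalPeriod (shift κ₀) ξ]) :
    (shift κ₀)^[a] ξ = (shift κ₀)^[b] ξ := by
  rw [← Function.iterate_mod_minimalPeriod_eq (n := a),
    ← Function.iterate_mod_minimalPeriod_eq (n := b)]
  rw [Nat.ModEq] at h
  rw [h]

lemma orb_eq_of_mem (ξ η : SigmaPlus κ₀) (hξ : 1 ≤ Function.minimalPeriod (shift κ₀) ξ)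
    (hη : η ∈ orb κ₀ ξ) : orb κ₀ η = orb κ₀ ξ := by
  obtain ⟨j, rfl⟩ := hη
  set d := Function.minimalPeriod (shift κ₀) ξ with hd
  ext ζ
  constructor
  · rintro ⟨i, rfl⟩
    rw [← Function.iterate_add_apply]
    exact ⟨i + j, rfl⟩
  · rintro ⟨i, rfl⟩
    refine ⟨i + (d - j % d), ?_⟩
    rw [← Function.iterate_add_apply]
    refine iterate_eq_of_modEq κ₀ ξ ?_
    have h1 : j % d ≡ j [MOD d] := Nat.mod_modEq j d
    have h2 : i + (d - j % d) + j ≡ i + (d - j % d) + j % d [MOD d] :=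
      Nat.ModEq.add_left _ h1.symm
    have h3 : i + (d - j % d) + j % d = i + d := by
      have : j % d < d := Nat.mod_lt _ (by omega)
      omega
    calc i + (d - j % d) + j ≡ i + (d - j % d) + j % d [MOD d] := h2
      _ = i + d := h3
      _ ≡ i + 0 [MOD d] := Nat.ModEq.add_left i (Nat.modEq_zero_iff_dvd.mpr dvd_rfl)
      _ = i := by omega

/-- The set of closed orbits of least period `d`. -/
def orbSet (d : ℕ) : Set (Set (SigmaPlus κ₀)) := orb κ₀ '' mset κ₀ d

lemma orbSet_finite (d : ℕ) (hd : 1 ≤ d) : (orbSet κ₀ d).Finite :=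
  (mset_finite κ₀ d hd).image _

lemma mset_card_eq (d : ℕ) (hd : 1 ≤ d) :
    (mset κ₀ d).ncard = d * (orbSet κ₀ d).ncard := by
  classical
  have hfin := mset_finite κ₀ d hd
  set s : Finset (SigmaPlus κ₀) := hfin.toFinset with hs
  have hsmem : ∀ ξ, ξ ∈ s ↔ Function.minimalPeriod (shift κ₀) ξ = d := by
    intro ξ; rw [hs, Set.Finite.mem_toFinset]; rfl
  set T : Finset (Set (SigmaPlus κ₀)) := s.image (orb κ₀) with hT
  have hcard : s.card = ∑ O ∈ T, (s.filter (fun ξ => orb κ₀ ξ = O)).card := by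
    refine Finset.card_eq_sum_card_fiberwise ?_
    intro ξ hξ
    exact Finset.mem_image_of_mem _ hξ
  have hfiber : ∀ O ∈ T, (s.filter (fun ξ => orb κ₀ ξ = O)).card = d := by
    intro O hO
    obtain ⟨ξ₀, hξ₀s, rfl⟩ := Finset.mem_image.mp hO
    have hξ₀ : Function.minimalPeriod (shift κ₀) ξ₀ = d := (hsmem ξ₀).mp hξ₀s
    have hd1 : 1 ≤ Function.minimalPeriod (shift κ₀) ξ₀ := by omega
    have horbfin := orb_finite κ₀ ξ₀ hd1
    have hset : (s.filter (fun ξ => orb κ₀ ξ = orb κ₀ ξ₀)) = horbfin.toFinset := by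
      apply Finset.ext
      intro η
      simp only [Finset.mem_filter, Set.Finite.mem_toFinset]
      constructor
      · rintro ⟨hmem, horb⟩
        rw [← horb]
        exact self_mem_orb κ₀ η
      · intro hη
        have h1 := minper_of_mem_orb κ₀ ξ₀ η hd1 hη
        refine ⟨(hsmem η).mpr (by omega), orb_eq_of_mem κ₀ ξ₀ η hd1 hη⟩
    rw [hset, ← Set.ncard_eq_toFinset_card _ horbfin, ncard_orb κ₀ ξ₀ hd1, hξ₀]
  have hTcard : T.card = (orbSet κ₀ d).ncard := by
    have : (orbSet κ₀ d) = ↑T := by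
      rw [hT, Finset.coe_image, hs, Set.Finite.coe_toFinset]
      rfl
    rw [this, Set.ncard_coe_finset]
  calc (mset κ₀ d).ncard = s.card := by rw [hs, ← Set.ncard_eq_toFinset_card _ hfin]
    _ = ∑ O ∈ T, (s.filter (fun ξ => orb κ₀ ξ = O)).card := hcard
    _ = ∑ _O ∈ T, d := Finset.sum_congr rfl hfiber
    _ = T.card * d := by rw [Finset.sum_const, smul_eq_mul]
    _ = d * (orbSet κ₀ d).ncard := by rw [hTcard]; ring

lemma orbSet_disjoint {d₁ d₂ : ℕ} (h1 : 1 ≤ d₁) (hne : d₁ ≠ d₂) :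
    Disjoint (orbSet κ₀ d₁) (orbSet κ₀ d₂) := by
  rw [Set.disjoint_left]
  rintro O ⟨ξ₁, hξ₁, rfl⟩ ⟨ξ₂, hξ₂, horb⟩
  have hm1 : Function.minimalPeriod (shift κ₀) ξ₁ = d₁ := hξ₁
  have hm2 : Function.minimalPeriod (shift κ₀) ξ₂ = d₂ := hξ₂
  have : ξ₂ ∈ orb κ₀ ξ₁ := by rw [← horb]; exact self_mem_orb κ₀ ξ₂
  have := minper_of_mem_orb κ₀ ξ₁ ξ₂ (by omega) this
  omega

lemma ncard_biUnion_eq {ι α : Type*} (t : Finset ι) (S : ι → Set α)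
    (hfin : ∀ i ∈ t, (S i).Finite)
    (hdisj : ∀ i ∈ t, ∀ j ∈ t, i ≠ j → Disjoint (S i) (S j)) :
    (⋃ i ∈ t, S i).ncard = ∑ i ∈ t, (S i).ncard := by
  classical
  induction t using Finset.induction with
  | empty => simp
  | insert a t' hx ih =>
    rw [Finset.set_biUnion_insert, Finset.sum_insert hx]
    have hfin' : ∀ i ∈ t', (S i).Finite := fun i hi => hfin i (Finset.mem_insert_of_mem hi)
    have hUfin : (⋃ i ∈ t', S i).Finite :=
      Set.Finite.biUnion t'.finite_toSet (fun i hi => hfin' i hi)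
    rw [Set.ncard_union_eq ?_ (hfin a (Finset.mem_insert_self a t')) hUfin]
    · rw [ih hfin' (fun i hi j hj hne =>
        hdisj i (Finset.mem_insert_of_mem hi) j (Finset.mem_insert_of_mem hj) hne)]
    · rw [Set.disjoint_left]
      intro x hxa hxU
      obtain ⟨i, hi, hxi⟩ := Set.mem_iUnion₂.mp hxU
      have hne : a ≠ i := fun h => hx (h ▸ hi)
      exact Set.disjoint_left.mp
        (hdisj a (Finset.mem_insert_self a t') i (Finset.mem_insert_of_mem hi) hne) hxa hxi

lemma closedOrbitCount_eq (n : ℕ) :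
    closedOrbitCount κ₀ n = ∑ d ∈ Finset.Icc 1 n, (orbSet κ₀ d).ncard := by
  have hs : {O : Set (SigmaPlus κ₀) | ∃ ξ : SigmaPlus κ₀,
      1 ≤ Function.minimalPeriod (shift κ₀) ξ ∧
      Function.minimalPeriod (shift κ₀) ξ ≤ n ∧
      O = {η : SigmaPlus κ₀ | ∃ j : ℕ, (shift κ₀)^[j] ξ = η}} =
      ⋃ d ∈ Finset.Icc 1 n, orbSet κ₀ d := by
    ext O
    constructor
    · rintro ⟨ξ, h1, h2, rfl⟩
      exact Set.mem_biUnion (Finset.mem_Icc.mpr ⟨h1, h2⟩)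
        ⟨ξ, rfl, rfl⟩
    · intro hO
      obtain ⟨d, hd, ξ, hξ, rfl⟩ := Set.mem_iUnion₂.mp hO
      rw [Finset.mem_Icc] at hd
      have : Function.minimalPeriod (shift κ₀) ξ = d := hξ
      exact ⟨ξ, by omega, by omega, rfl⟩
  rw [closedOrbitCount, hs]
  refine ncard_biUnion_eq _ _ ?_ ?_
  · intro d hd
    exact orbSet_finite κ₀ d (Finset.mem_Icc.mp hd).1
  · intro d₁ hd₁ d₂ hd₂ hne
    exact orbSet_disjoint κ₀ (Finset.mem_Icc.mp hd₁).1 hne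

section Analysis

noncomputable def LL : ℝ := (κ₀ : ℝ) - 1

lemma LL_ge_two (hκ : 3 ≤ κ₀) : 2 ≤ LL κ₀ := by
  have : (3 : ℝ) ≤ (κ₀ : ℝ) := by exact_mod_cast hκ
  rw [LL]; linarith

lemma LL_pos (hκ : 3 ≤ κ₀) : 0 < LL κ₀ := lt_of_lt_of_le two_pos (LL_ge_two κ₀ hκ)

lemma ncard_per_bounds (hκ : 3 ≤ κ₀) (m : ℕ) (hm : 1 ≤ m) :
    LL κ₀ ^ m - LL κ₀ ≤ ((per κ₀ m).ncard : ℝ) ∧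
    ((per κ₀ m).ncard : ℝ) ≤ LL κ₀ ^ m + LL κ₀ := by
  have h := ncard_per κ₀ hκ m hm
  have hL := LL_pos κ₀ hκ
  have habs : |(-1 : ℝ) ^ m| = 1 := by
    rw [abs_pow, abs_neg, abs_one, one_pow]
  have h1 : -(1 : ℝ) ≤ (-1 : ℝ) ^ m := neg_abs_le _ |>.trans_eq' (by rw [habs])
  have h2 : ((-1 : ℝ) ^ m) ≤ 1 := (le_abs_self _).trans_eq habs
  constructor
  · rw [show ((per κ₀ m).ncard : ℝ) = LL κ₀ ^ m + LL κ₀ * (-1) ^ m from h]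
    nlinarith
  · rw [show ((per κ₀ m).ncard : ℝ) = LL κ₀ ^ m + LL κ₀ * (-1) ^ m from h]
    nlinarith

lemma mset_upper (hκ : 3 ≤ κ₀) (m : ℕ) (hm : 1 ≤ m) :
    ((mset κ₀ m).ncard : ℝ) ≤ LL κ₀ ^ m + LL κ₀ := by
  have h1 : (mset κ₀ m).ncard ≤ (per κ₀ m).ncard :=
    Set.ncard_le_ncard (mset_subset_per κ₀ m) (per_finite κ₀ m hm)
  calc ((mset κ₀ m).ncard : ℝ) ≤ ((per κ₀ m).ncard : ℝ) := by exact_mod_cast h1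
    _ ≤ _ := (ncard_per_bounds κ₀ hκ m hm).2

lemma mset_lower (hκ : 3 ≤ κ₀) (m : ℕ) (hm : 1 ≤ m) :
    LL κ₀ ^ m - LL κ₀ - (m : ℝ) * (LL κ₀ ^ (m / 2) + LL κ₀) ≤ ((mset κ₀ m).ncard : ℝ) := by
  have hL := LL_pos κ₀ hκ
  have hL1 : 1 ≤ LL κ₀ := le_trans one_le_two (LL_ge_two κ₀ hκ)
  have hper := ncard_per_le κ₀ m hm
  have hsum : (∑ d ∈ Finset.Icc 1 (m / 2), ((per κ₀ d).ncard : ℝ)) ≤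
      (m : ℝ) * (LL κ₀ ^ (m / 2) + LL κ₀) := by
    have hterm : ∀ d ∈ Finset.Icc 1 (m / 2),
        ((per κ₀ d).ncard : ℝ) ≤ LL κ₀ ^ (m / 2) + LL κ₀ := by
      intro d hd
      rw [Finset.mem_Icc] at hd
      calc ((per κ₀ d).ncard : ℝ) ≤ LL κ₀ ^ d + LL κ₀ := (ncard_per_bounds κ₀ hκ d hd.1).2
        _ ≤ LL κ₀ ^ (m / 2) + LL κ₀ := by
            have := pow_le_pow_right₀ hL1 hd.2
            linarith
    calc (∑ d ∈ Finset.Icc 1 (m / 2), ((per κ₀ d).ncard : ℝ))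
        ≤ ∑ _d ∈ Finset.Icc 1 (m / 2), (LL κ₀ ^ (m / 2) + LL κ₀) :=
          Finset.sum_le_sum hterm
      _ = ((Finset.Icc 1 (m / 2)).card : ℝ) * (LL κ₀ ^ (m / 2) + LL κ₀) := by
          rw [Finset.sum_const, nsmul_eq_mul]
      _ ≤ (m : ℝ) * (LL κ₀ ^ (m / 2) + LL κ₀) := by
          have hcard : (Finset.Icc 1 (m / 2)).card ≤ m := by
            rw [Nat.card_Icc]; omega
          have hpos : 0 ≤ LL κ₀ ^ (m / 2) + LL κ₀ := by positivity
          exact mul_le_mul_of_nonneg_right (by exact_mod_cast hcard) hpos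
  have hcast : ((per κ₀ m).ncard : ℝ) ≤ ((mset κ₀ m).ncard : ℝ) +
      ∑ d ∈ Finset.Icc 1 (m / 2), ((per κ₀ d).ncard : ℝ) := by
    push_cast [← Nat.cast_sum]
    exact_mod_cast hper
  have hlow := (ncard_per_bounds κ₀ hκ m hm).1
  linarith

lemma orbSet_ncard_eq (d : ℕ) (hd : 1 ≤ d) :
    ((orbSet κ₀ d).ncard : ℝ) = ((mset κ₀ d).ncard : ℝ) / d := by
  have h := mset_card_eq κ₀ d hd
  have : ((mset κ₀ d).ncard : ℝ) = (d : ℝ) * ((orbSet κ₀ d).ncard : ℝ) := by exact_mod_cast h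
  rw [this]
  field_simp

lemma orbSet_ncard_close (hκ : 3 ≤ κ₀) (d : ℕ) (hd : 1 ≤ d) :
    |((orbSet κ₀ d).ncard : ℝ) - LL κ₀ ^ d / d| ≤ ((d : ℝ) + 1) * (LL κ₀ ^ (d / 2) + LL κ₀) := by
  have hL := LL_pos κ₀ hκ
  have hd0 : (0 : ℝ) < (d : ℝ) := by exact_mod_cast hd
  rw [orbSet_ncard_eq κ₀ d hd, div_sub_div_same, abs_div, abs_of_pos hd0]
  have hnum : |((mset κ₀ d).ncard : ℝ) - LL κ₀ ^ d| ≤ ((d : ℝ) + 1) * (LL κ₀ ^ (d / 2) + LL κ₀) := by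
    rw [abs_sub_le_iff]
    have hup := mset_upper κ₀ hκ d hd
    have hlo := mset_lower κ₀ hκ d hd
    have hLp : 0 ≤ LL κ₀ ^ (d / 2) := by positivity
    have hLL : LL κ₀ ≤ LL κ₀ ^ (d / 2) + LL κ₀ := by linarith
    constructor
    · nlinarith
    · nlinarith
  calc |((mset κ₀ d).ncard : ℝ) - LL κ₀ ^ d| / (d : ℝ)
      ≤ |((mset κ₀ d).ncard : ℝ) - LL κ₀ ^ d| :=
        div_le_self (abs_nonneg _) (by exact_mod_cast hd)
    _ ≤ _ := hnum


open Filter Topology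

/-- Weighted geometric partial sum. -/
noncomputable def G (κ₀ n : ℕ) : ℝ := ∑ d ∈ Finset.Icc 1 n, LL κ₀ ^ d / d

lemma G_eq_range (n : ℕ) : G κ₀ n = ∑ i ∈ Finset.range n, LL κ₀ ^ (1 + i) / ((1 + i : ℕ) : ℝ) := by
  rw [G, ← Finset.Ico_add_one_right_eq_Icc, Finset.sum_Ico_eq_sum_range]
  simp

/-- The summand after reindexing. -/
noncomputable def ff (κ₀ n k : ℕ) : ℝ :=
  if k < n then (n : ℝ) / ((n - k : ℕ) : ℝ) * (LL κ₀)⁻¹ ^ k else 0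

lemma tsum_ff (hκ : 3 ≤ κ₀) (n : ℕ) :
    ∑' k, ff κ₀ n k = (n : ℝ) * (LL κ₀ ^ n)⁻¹ * G κ₀ n := by
  have hL := LL_pos κ₀ hκ
  have hL0 : LL κ₀ ≠ 0 := ne_of_gt hL
  rw [tsum_eq_sum (s := Finset.range n) (fun k hk => by
    rw [ff, if_neg (by simpa using hk)])]
  rw [G_eq_range, Finset.mul_sum]
  conv_rhs => rw [← Finset.sum_range_reflect]
  refine Finset.sum_congr rfl ?_
  intro j hj
  rw [Finset.mem_range] at hj
  have e1 : 1 + (n - 1 - j) = n - j := by omega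
  rw [ff, if_pos hj, e1]
  have epow : LL κ₀ ^ (n - j) * LL κ₀ ^ j = LL κ₀ ^ n := by
    rw [← pow_add]; congr 1; omega
  have hnj : ((n - j : ℕ) : ℝ) ≠ 0 := by
    have : 0 < n - j := by omega
    exact_mod_cast Nat.pos_iff_ne_zero.mp this
  have hpownj : LL κ₀ ^ (n - j) = LL κ₀ ^ n * (LL κ₀ ^ j)⁻¹ := by
    field_simp [← epow]
    exact epow
  rw [hpownj, inv_pow]
  have hLn : (LL κ₀ ^ n) ≠ 0 := pow_ne_zero _ hL0
  have hLj : (LL κ₀ ^ j) ≠ 0 := pow_ne_zero _ hL0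
  field_simp
  try exact Or.inl trivial

lemma ff_bound (hκ : 3 ≤ κ₀) (n k : ℕ) :
    ‖ff κ₀ n k‖ ≤ ((k : ℝ) + 1) * (LL κ₀)⁻¹ ^ k := by
  have hL := LL_pos κ₀ hκ
  have hq : 0 ≤ (LL κ₀)⁻¹ ^ k := by positivity
  rw [ff]
  split_ifs with h
  · have hnk : (0 : ℝ) < ((n - k : ℕ) : ℝ) := by
      have : 0 < n - k := by omega
      exact_mod_cast this
    have hratio : (n : ℝ) / ((n - k : ℕ) : ℝ) ≤ (k : ℝ) + 1 := by
      rw [div_le_iff₀ hnk]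
      have hnat : n ≤ (k + 1) * (n - k) := by
        have h1 : 1 ≤ n - k := by omega
        calc n = (n - k) + k := by omega
          _ ≤ (n - k) + k * (n - k) := by nlinarith
          _ = (k + 1) * (n - k) := by ring
      calc (n : ℝ) ≤ (((k + 1) * (n - k) : ℕ) : ℝ) := by exact_mod_cast hnat
        _ = ((k : ℝ) + 1) * ((n - k : ℕ) : ℝ) := by push_cast; ring
    have hnn : 0 ≤ (n : ℝ) / ((n - k : ℕ) : ℝ) := by positivity
    rw [Real.norm_eq_abs, abs_of_nonneg (by positivity)]
    exact mul_le_mul_of_nonneg_right hratio hq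
  · simp
    positivity

lemma ff_tendsto (hκ : 3 ≤ κ₀) (k : ℕ) :
    Tendsto (fun n => ff κ₀ n k) atTop (𝓝 ((LL κ₀)⁻¹ ^ k)) := by
  have h1 : Tendsto (fun n : ℕ => ((n - k : ℕ) : ℝ)) atTop atTop :=
    tendsto_natCast_atTop_atTop.comp (tendsto_sub_atTop_nat k)
  have h2 : Tendsto (fun n : ℕ => (k : ℝ) / ((n - k : ℕ) : ℝ)) atTop (𝓝 0) :=
    Tendsto.div_atTop tendsto_const_nhds h1
  have h3 : Tendsto (fun n : ℕ => (1 + (k : ℝ) / ((n - k : ℕ) : ℝ)) * (LL κ₀)⁻¹ ^ k)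
      atTop (𝓝 ((LL κ₀)⁻¹ ^ k)) := by
    have := (tendsto_const_nhds (x := (1:ℝ)).add h2).mul_const ((LL κ₀)⁻¹ ^ k)
    simpa using this
  refine Tendsto.congr' ?_ h3
  filter_upwards [eventually_ge_atTop (k + 1)] with n hn
  have hk : k < n := by omega
  have hnk : ((n - k : ℕ) : ℝ) ≠ 0 := by
    have : 0 < n - k := by omega
    exact_mod_cast Nat.pos_iff_ne_zero.mp this
  rw [ff, if_pos hk]
  have hc : ((n - k : ℕ) : ℝ) = (n : ℝ) - (k : ℝ) := by
    push_cast [Nat.cast_sub hk.le]; ring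
  congr 1
  rw [hc]
  have hne : (n : ℝ) - (k : ℝ) ≠ 0 := by
    have : (k : ℝ) < (n : ℝ) := by exact_mod_cast hk
    linarith
  field_simp
  ring

lemma summable_bound (hκ : 3 ≤ κ₀) :
    Summable (fun k : ℕ => ((k : ℝ) + 1) * (LL κ₀)⁻¹ ^ k) := by
  have hL2 := LL_ge_two κ₀ hκ
  have hq0 : 0 ≤ (LL κ₀)⁻¹ := by positivity
  have hq1 : (LL κ₀)⁻¹ < 1 := by
    rw [inv_lt_one_iff₀]; right; linarith
  have hnorm : ‖(LL κ₀)⁻¹‖ < 1 := by rwa [Real.norm_eq_abs, abs_of_nonneg hq0]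
  have h1 : Summable (fun k : ℕ => (k : ℝ) ^ 1 * (LL κ₀)⁻¹ ^ k) :=
    summable_pow_mul_geometric_of_norm_lt_one 1 hnorm
  have h2 : Summable (fun k : ℕ => (LL κ₀)⁻¹ ^ k) := summable_geometric_of_lt_one hq0 hq1
  have := h1.add h2
  refine this.congr ?_
  intro k
  rw [pow_one]
  ring

lemma G_limit (hκ : 3 ≤ κ₀) :
    Tendsto (fun n : ℕ => (n : ℝ) * (LL κ₀ ^ n)⁻¹ * G κ₀ n) atTop
      (𝓝 (LL κ₀ / (LL κ₀ - 1))) := by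
  have hL2 := LL_ge_two κ₀ hκ
  have hq0 : 0 ≤ (LL κ₀)⁻¹ := by positivity
  have hq1 : (LL κ₀)⁻¹ < 1 := by rw [inv_lt_one_iff₀]; right; linarith
  have hmain := tendsto_tsum_of_dominated_convergence (f := fun n k => ff κ₀ n k)
    (g := fun k => (LL κ₀)⁻¹ ^ k) (bound := fun k => ((k : ℝ) + 1) * (LL κ₀)⁻¹ ^ k)
    (summable_bound κ₀ hκ) (ff_tendsto κ₀ hκ)
    (Eventually.of_forall (fun n k => ff_bound κ₀ hκ n k))
  have htsumg : ∑' k, (LL κ₀)⁻¹ ^ k = LL κ₀ / (LL κ₀ - 1) := by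
    rw [tsum_geometric_of_lt_one hq0 hq1]
    have h1 : LL κ₀ ≠ 0 := by linarith
    have h2 : LL κ₀ - 1 ≠ 0 := by linarith
    field_simp
  rw [htsumg] at hmain
  refine Tendsto.congr ?_ hmain
  intro n
  exact tsum_ff κ₀ hκ n

lemma NG_bound (hκ : 3 ≤ κ₀) (n : ℕ) :
    |(closedOrbitCount κ₀ n : ℝ) - G κ₀ n| ≤
      (n : ℝ) * (((n : ℝ) + 1) * (LL κ₀ ^ (n / 2) + LL κ₀)) := by
  have hL := LL_pos κ₀ hκ
  have hL1 : 1 ≤ LL κ₀ := by have := LL_ge_two κ₀ hκ; linarith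
  have hN : (closedOrbitCount κ₀ n : ℝ) = ∑ d ∈ Finset.Icc 1 n, ((orbSet κ₀ d).ncard : ℝ) := by
    rw [closedOrbitCount_eq]
    push_cast
    rfl
  rw [hN, G, ← Finset.sum_sub_distrib]
  refine le_trans (Finset.abs_sum_le_sum_abs _ _) ?_
  have hterm : ∀ d ∈ Finset.Icc 1 n,
      |((orbSet κ₀ d).ncard : ℝ) - LL κ₀ ^ d / d| ≤ ((n : ℝ) + 1) * (LL κ₀ ^ (n / 2) + LL κ₀) := by
    intro d hd
    rw [Finset.mem_Icc] at hd
    refine le_trans (orbSet_ncard_close κ₀ hκ d hd.1) ?_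
    have h1 : ((d : ℝ) + 1) ≤ ((n : ℝ) + 1) := by
      have : (d : ℝ) ≤ (n : ℝ) := by exact_mod_cast hd.2
      linarith
    have h2 : LL κ₀ ^ (d / 2) ≤ LL κ₀ ^ (n / 2) :=
      pow_le_pow_right₀ hL1 (Nat.div_le_div_right hd.2)
    have hpos1 : (0 : ℝ) ≤ LL κ₀ ^ (d / 2) + LL κ₀ := by positivity
    have hpos2 : (0 : ℝ) ≤ (d : ℝ) + 1 := by positivity
    nlinarith
  calc ∑ d ∈ Finset.Icc 1 n, |((orbSet κ₀ d).ncard : ℝ) - LL κ₀ ^ d / d|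
      ≤ ∑ _d ∈ Finset.Icc 1 n, ((n : ℝ) + 1) * (LL κ₀ ^ (n / 2) + LL κ₀) :=
        Finset.sum_le_sum hterm
    _ = ((Finset.Icc 1 n).card : ℝ) * (((n : ℝ) + 1) * (LL κ₀ ^ (n / 2) + LL κ₀)) := by
        rw [Finset.sum_const, nsmul_eq_mul]
    _ ≤ (n : ℝ) * (((n : ℝ) + 1) * (LL κ₀ ^ (n / 2) + LL κ₀)) := by
        have hcard : (Finset.Icc 1 n).card ≤ n := by rw [Nat.card_Icc]; omega
        have : (0 : ℝ) ≤ ((n : ℝ) + 1) * (LL κ₀ ^ (n / 2) + LL κ₀) := by positivity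
        exact mul_le_mul_of_nonneg_right (by exact_mod_cast hcard) this

lemma error_tendsto (hκ : 3 ≤ κ₀) :
    Tendsto (fun n : ℕ => (n : ℝ) * (LL κ₀ ^ n)⁻¹ * ((closedOrbitCount κ₀ n : ℝ) - G κ₀ n))
      atTop (𝓝 0) := by
  have hL := LL_pos κ₀ hκ
  have hL2 := LL_ge_two κ₀ hκ
  have hL1 : (1 : ℝ) < LL κ₀ := by linarith
  set sq := Real.sqrt (LL κ₀) with hsqdef
  have hsq2 : sq ^ 2 = LL κ₀ := Real.sq_sqrt hL.le
  have hsq0 : 0 ≤ sq := Real.sqrt_nonneg _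
  have hsq1 : 1 < sq := by nlinarith
  have hq0 : 0 ≤ sq⁻¹ := by positivity
  have hq1 : sq⁻¹ < 1 := by rw [inv_lt_one_iff₀]; right; exact hsq1
  have hp0 : 0 ≤ (LL κ₀)⁻¹ := by positivity
  have hp1 : (LL κ₀)⁻¹ < 1 := by rw [inv_lt_one_iff₀]; right; exact hL1
  -- bound |E n| ≤ B n ≤ C n with C → 0
  set B : ℕ → ℝ := fun n => (n : ℝ) ^ 2 * ((n : ℝ) + 1) *
    (LL κ₀ ^ (n / 2) * (LL κ₀ ^ n)⁻¹ + LL κ₀ * (LL κ₀ ^ n)⁻¹) with hBdef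
  set C : ℕ → ℝ := fun n => (((n : ℝ) ^ 3 * sq⁻¹ ^ n + (n : ℝ) ^ 2 * sq⁻¹ ^ n) +
    LL κ₀ * ((n : ℝ) ^ 3 * (LL κ₀)⁻¹ ^ n + (n : ℝ) ^ 2 * (LL κ₀)⁻¹ ^ n)) with hCdef
  have hEB : ∀ n : ℕ, ‖(n : ℝ) * (LL κ₀ ^ n)⁻¹ * ((closedOrbitCount κ₀ n : ℝ) - G κ₀ n)‖ ≤ B n := by
    intro n
    have hNG := NG_bound κ₀ hκ n
    have hpos : (0 : ℝ) < (LL κ₀ ^ n)⁻¹ := by positivity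
    rw [Real.norm_eq_abs, abs_mul, abs_mul, abs_of_nonneg (Nat.cast_nonneg n),
      abs_of_pos hpos]
    calc (n : ℝ) * (LL κ₀ ^ n)⁻¹ * |(closedOrbitCount κ₀ n : ℝ) - G κ₀ n|
        ≤ (n : ℝ) * (LL κ₀ ^ n)⁻¹ * ((n : ℝ) * (((n : ℝ) + 1) * (LL κ₀ ^ (n / 2) + LL κ₀))) := by
          refine mul_le_mul_of_nonneg_left hNG ?_
          positivity
      _ = B n := by rw [hBdef]; ring
  have hBC : ∀ n, B n ≤ C n := by
    intro n
    have hkey : LL κ₀ ^ (n / 2) * (LL κ₀ ^ n)⁻¹ ≤ sq⁻¹ ^ n := by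
      have h1 : LL κ₀ ^ (n / 2) ≤ sq ^ n := by
        calc LL κ₀ ^ (n / 2) = (sq ^ 2) ^ (n / 2) := by rw [hsq2]
          _ = sq ^ (2 * (n / 2)) := by rw [← pow_mul]
          _ ≤ sq ^ n := pow_le_pow_right₀ hsq1.le (by omega)
      have h2 : (LL κ₀ ^ n)⁻¹ = ((sq ^ n) ^ 2)⁻¹ := by
        rw [← hsq2, ← pow_mul, ← pow_mul, Nat.mul_comm]
      have hsqn : (0 : ℝ) < sq ^ n := by positivity
      rw [h2]
      calc LL κ₀ ^ (n / 2) * ((sq ^ n) ^ 2)⁻¹ ≤ sq ^ n * ((sq ^ n) ^ 2)⁻¹ := by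
            refine mul_le_mul_of_nonneg_right h1 (by positivity)
        _ = (sq ^ n)⁻¹ := by field_simp
        _ = sq⁻¹ ^ n := by rw [inv_pow]
    have hLLn : LL κ₀ * (LL κ₀ ^ n)⁻¹ = LL κ₀ * (LL κ₀)⁻¹ ^ n := by rw [inv_pow]
    calc B n = ((n : ℝ) ^ 3 + (n : ℝ) ^ 2) * (LL κ₀ ^ (n / 2) * (LL κ₀ ^ n)⁻¹) +
        ((n : ℝ) ^ 3 + (n : ℝ) ^ 2) * (LL κ₀ * (LL κ₀)⁻¹ ^ n) := by
          simp only [hBdef]; rw [← hLLn]; ring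
      _ ≤ ((n : ℝ) ^ 3 + (n : ℝ) ^ 2) * (sq⁻¹ ^ n) +
        ((n : ℝ) ^ 3 + (n : ℝ) ^ 2) * (LL κ₀ * (LL κ₀)⁻¹ ^ n) := by
          have := mul_le_mul_of_nonneg_left hkey
            (show (0 : ℝ) ≤ (n : ℝ) ^ 3 + (n : ℝ) ^ 2 by positivity)
          linarith
      _ = C n := by simp only [hCdef]; ring
  have hC0 : Tendsto C atTop (𝓝 0) := by
    have t1 := tendsto_pow_const_mul_const_pow_of_lt_one 3 hq0 hq1
    have t2 := tendsto_pow_const_mul_const_pow_of_lt_one 2 hq0 hq1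
    have t3 := tendsto_pow_const_mul_const_pow_of_lt_one 3 hp0 hp1
    have t4 := tendsto_pow_const_mul_const_pow_of_lt_one 2 hp0 hp1
    rw [hCdef]
    have := (t1.add t2).add ((t3.add t4).const_mul (LL κ₀))
    simpa using this
  refine squeeze_zero_norm hEB ?_
  refine squeeze_zero (fun n => by rw [hBdef]; positivity) hBC hC0

end Analysis

end OB


/-- With `h₀ = log (κ₀ - 1)`, the number `N n` of closed orbits of least period at most `n`
satisfies `N n ~ (e^{h₀}/(e^{h₀} - 1)) · e^{h₀ n}/n` as `n → ∞`, i.e.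
`n · e^{-h₀ n} · N n → e^{h₀}/(e^{h₀} - 1)`. -/
theorem closed_orbit_asymptotics (κ₀ : ℕ) (hκ : 3 ≤ κ₀) :
    Filter.Tendsto
      (fun n : ℕ => (n : ℝ) * Real.exp (-(Real.log ((κ₀ : ℝ) - 1)) * n) *
        (closedOrbitCount κ₀ n : ℝ))
      Filter.atTop
      (nhds (Real.exp (Real.log ((κ₀ : ℝ) - 1)) /
        (Real.exp (Real.log ((κ₀ : ℝ) - 1)) - 1))) := by
  have hL : (0 : ℝ) < (κ₀ : ℝ) - 1 := by
    have : (3 : ℝ) ≤ (κ₀ : ℝ) := by exact_mod_cast hκ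
    linarith
  have hexp : Real.exp (Real.log ((κ₀ : ℝ) - 1)) = (κ₀ : ℝ) - 1 := Real.exp_log hL
  rw [hexp]
  have key : Filter.Tendsto
      (fun n : ℕ => (n : ℝ) * (OB.LL κ₀ ^ n)⁻¹ * (closedOrbitCount κ₀ n : ℝ))
      Filter.atTop (nhds (OB.LL κ₀ / (OB.LL κ₀ - 1))) := by
    have h1 := OB.G_limit κ₀ hκ
    have h2 := OB.error_tendsto κ₀ hκ
    have h3 := h1.add h2
    rw [add_zero] at h3
    refine Filter.Tendsto.congr (fun n => by ring) h3
  have hfun : ∀ n : ℕ, (n : ℝ) * Real.exp (-(Real.log ((κ₀ : ℝ) - 1)) * n) *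
      (closedOrbitCount κ₀ n : ℝ) =
      (n : ℝ) * (OB.LL κ₀ ^ n)⁻¹ * (closedOrbitCount κ₀ n : ℝ) := by
    intro n
    have : Real.exp (-(Real.log ((κ₀ : ℝ) - 1)) * n) = (OB.LL κ₀ ^ n)⁻¹ := by
      rw [neg_mul, Real.exp_neg, mul_comm (Real.log _) (n : ℝ), Real.exp_nat_mul,
        Real.exp_log hL]
      rfl
    rw [this]
  exact Filter.Tendsto.congr (fun n => (hfun n).symm) key
end

section
/- Endow Σ_A^+ with the topology induced from the product topology on (Fin κ₀)^ℕ (equivalently, the topology of the metric d_θ for any θ ∈ (0,1)). Then Σ_A^+ is a compact space, σ is continuous, and the topological entropy of σ : Σ_A^+ → Σ_A^+ (the cover entropy with respect to the uniformity of this compact space) equals log(κ₀ − 1). -/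
open Uniformity Filter Set
open scoped ENNReal


/-- The discrete uniformity on the finite alphabet `Fin κ₀`; it induces the discrete
topology, so the product uniformity on `ℕ → Fin κ₀` induces the product topology. -/
instance (κ₀ : ℕ) : UniformSpace (Fin κ₀) := ⊥

namespace ShiftAux

/-! ### Elementary modular arithmetic helpers -/

lemma step_ne {κ₀ d c : ℕ} (hd : d < κ₀) (hc1 : 1 ≤ c) (hc2 : c < κ₀) : (d + c) % κ₀ ≠ d := by
  rcases Nat.lt_or_ge (d + c) κ₀ with h | h
  · rw [Nat.mod_eq_of_lt h]; omega
  · rw [Nat.mod_eq_sub_mod h, Nat.mod_eq_of_lt (by omega)]; omega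

lemma step_inj {κ₀ d c c' : ℕ} (hd : d < κ₀) (hc1 : 1 ≤ c) (hc2 : c < κ₀)
    (hc1' : 1 ≤ c') (hc2' : c' < κ₀) (h : (d + c) % κ₀ = (d + c') % κ₀) : c = c' := by
  rcases Nat.lt_or_ge (d + c) κ₀ with h1 | h1 <;> rcases Nat.lt_or_ge (d + c') κ₀ with h2 | h2 <;>
    [rw [Nat.mod_eq_of_lt h1, Nat.mod_eq_of_lt h2] at h;
     rw [Nat.mod_eq_of_lt h1, Nat.mod_eq_sub_mod h2, Nat.mod_eq_of_lt (by omega)] at h;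
     rw [Nat.mod_eq_sub_mod h1, Nat.mod_eq_of_lt (by omega), Nat.mod_eq_of_lt h2] at h;
     rw [Nat.mod_eq_sub_mod h1, Nat.mod_eq_of_lt (by omega), Nat.mod_eq_sub_mod h2,
       Nat.mod_eq_of_lt (by omega)] at h] <;> omega

variable {κ₀ : ℕ}

/-! ### Decoding sequences from initial symbol and increments -/

/-- decode: starting symbol `a`, increments `v j + 1`. -/
def D (hκ : 0 < κ₀) (a : Fin κ₀) (v : ℕ → Fin (κ₀ - 1)) : ℕ → Fin κ₀
  | 0 => a
  | (j + 1) => ⟨((D hκ a v j).1 + (v j).1 + 1) % κ₀, Nat.mod_lt _ hκ⟩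

lemma D_succ_ne (hκ : 0 < κ₀) (a : Fin κ₀) (v : ℕ → Fin (κ₀ - 1)) (j : ℕ) :
    D hκ a v j ≠ D hκ a v (j + 1) := by
  have hv := (v j).2
  intro h
  apply step_ne (c := (v j).1 + 1) (D hκ a v j).2 (by omega) (by omega)
  rw [show (D hκ a v j).1 + ((v j).1 + 1) = (D hκ a v j).1 + (v j).1 + 1 by ring]
  exact congrArg Fin.val h.symm

/-- decode as an element of the shift space -/
def Dx (hκ : 0 < κ₀) (a : Fin κ₀) (v : ℕ → Fin (κ₀ - 1)) : SigmaPlus κ₀ :=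
  ⟨D hκ a v, D_succ_ne hκ a v⟩

lemma step_key {κ₀ b d : ℕ} (hb : b < κ₀) (hd : d < κ₀) (hne : d ≠ b) :
    (d + ((b + κ₀ - d) % κ₀ - 1) + 1) % κ₀ = b := by
  have hc : (b + κ₀ - d) % κ₀ = b + κ₀ - d ∧ b < d ∨ (b + κ₀ - d) % κ₀ = b - d ∧ d < b := by
    rcases Nat.lt_or_ge (b + κ₀ - d) κ₀ with h | h
    · exact Or.inl ⟨Nat.mod_eq_of_lt h, by omega⟩
    · refine Or.inr ⟨?_, by omega⟩
      rw [Nat.mod_eq_sub_mod h]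
      rw [Nat.mod_eq_of_lt (by omega)]
      omega
  rcases hc with ⟨hc, hbd⟩ | ⟨hc, hbd⟩
  · rw [hc, show d + (b + κ₀ - d - 1) + 1 = b + κ₀ by omega, Nat.add_mod_right,
      Nat.mod_eq_of_lt hb]
  · rw [hc, show d + (b - d - 1) + 1 = b by omega, Nat.mod_eq_of_lt hb]

/-- every point is decodable -/
lemma exists_decode (hκ : 0 < κ₀) (ξ : SigmaPlus κ₀) :
    ∃ a v, ξ = Dx hκ a v := by
  have hlt : ∀ j, ((ξ.1 (j+1)).1 + κ₀ - (ξ.1 j).1) % κ₀ - 1 < κ₀ - 1 := by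
    intro j
    have h1 := (ξ.1 j).2
    have h2 := (ξ.1 (j+1)).2
    have hne : (ξ.1 j).1 ≠ (ξ.1 (j+1)).1 := fun h => ξ.2 j (Fin.ext h)
    rcases Nat.lt_or_ge ((ξ.1 (j+1)).1 + κ₀ - (ξ.1 j).1) κ₀ with h | h
    · rw [Nat.mod_eq_of_lt h]; omega
    · rw [Nat.mod_eq_sub_mod h, Nat.mod_eq_of_lt (by omega)]; omega
  refine ⟨ξ.1 0, fun j => ⟨_, hlt j⟩, ?_⟩
  apply Subtype.ext
  funext j
  induction j with
  | zero => rfl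
  | succ j ih =>
    have ihv : (ξ.1 j).1 = (D hκ (ξ.1 0) (fun j => ⟨_, hlt j⟩) j).1 := congrArg Fin.val ih
    apply Fin.ext
    show (ξ.1 (j+1)).1 =
      ((D hκ (ξ.1 0) (fun j => ⟨_, hlt j⟩) j).1 + (((ξ.1 (j+1)).1 + κ₀ - (ξ.1 j).1) % κ₀ - 1) + 1) % κ₀
    rw [← ihv]
    exact (step_key (ξ.1 (j+1)).2 (ξ.1 j).2 (fun h => ξ.2 j (Fin.ext h))).symm

/-- prefix dependence: `D` up to `L` only depends on `v` below `L`. -/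
lemma D_congr (hκ : 0 < κ₀) (a : Fin κ₀) {v w : ℕ → Fin (κ₀ - 1)} {L : ℕ}
    (hvw : ∀ i < L, v i = w i) : ∀ j ≤ L, D hκ a v j = D hκ a w j := by
  intro j hj
  induction j with
  | zero => rfl
  | succ j ih =>
    apply Fin.ext
    show ((D hκ a v j).1 + (v j).1 + 1) % κ₀ = ((D hκ a w j).1 + (w j).1 + 1) % κ₀
    rw [show (D hκ a v j).1 = (D hκ a w j).1 from congrArg Fin.val (ih (by omega)),
      show (v j).1 = (w j).1 from congrArg Fin.val (hvw j (by omega))]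

/-- injectivity of the increments from prefixes -/
lemma D_inj (hκ : 0 < κ₀) {a a' : Fin κ₀} {v w : ℕ → Fin (κ₀ - 1)} {L : ℕ}
    (h : ∀ j ≤ L, D hκ a v j = D hκ a' w j) : a = a' ∧ ∀ i < L, v i = w i := by
  refine ⟨h 0 (by omega), fun i hi => ?_⟩
  have h1 := h i (by omega)
  have h2 := h (i + 1) (by omega)
  have h2' : ((D hκ a v i).1 + (v i).1 + 1) % κ₀ = ((D hκ a' w i).1 + (w i).1 + 1) % κ₀ :=
    congrArg Fin.val h2
  rw [← h1] at h2'
  have hv := (v i).2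
  have hw := (w i).2
  apply Fin.ext
  have := step_inj (c := (v i).1 + 1) (c' := (w i).1 + 1) (D hκ a v i).2 (by omega) (by omega)
    (by omega) (by omega)
    (by rw [show ∀ x y : ℕ, x + (y+1) = x + y + 1 from fun x y => rfl]; exact h2')
  omega

/-! ### The uniformity basis -/

/-- the entourage: agreement on the first `m` coordinates. -/
def V (κ₀ m : ℕ) : Set (SigmaPlus κ₀ × SigmaPlus κ₀) :=
  {p | ∀ i < m, p.1.1 i = p.2.1 i}

lemma V_symm (κ₀ m : ℕ) : SetRel.IsSymm (V κ₀ m) := by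
  exact ⟨fun _ _ h i hi => (h i hi).symm⟩

lemma V_comp (κ₀ m : ℕ) : SetRel.comp (V κ₀ m) (V κ₀ m) = V κ₀ m := by
  apply Set.Subset.antisymm
  · rintro ⟨x, y⟩ ⟨z, hz1, hz2⟩ i hi
    exact (hz1 i hi).trans (hz2 i hi)
  · rintro ⟨x, y⟩ h
    exact ⟨x, fun i _ => rfl, h⟩

lemma V_antitone (κ₀ : ℕ) : Antitone (V κ₀) :=
  fun _ _ hmn _ hp i hi => hp i (lt_of_lt_of_le hi hmn)

lemma hasBasis_uniformity (κ₀ : ℕ) :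
    (𝓤 (SigmaPlus κ₀)).HasBasis (fun _ : ℕ => True) (V κ₀) := by
  have hPi : 𝓤 (ℕ → Fin κ₀) =
      ⨅ i : ℕ, Filter.principal {p : (ℕ → Fin κ₀) × (ℕ → Fin κ₀) | p.1 i = p.2 i} := by
    rw [Pi.uniformity]
    refine iInf_congr fun i => ?_
    rw [show 𝓤 (Fin κ₀) = Filter.principal SetRel.id from rfl, Filter.comap_principal]
    congr 1
  have hX : 𝓤 (SigmaPlus κ₀) = ⨅ m : ℕ, Filter.principal (V κ₀ m) := by
    have : 𝓤 (SigmaPlus κ₀) = Filter.comap (fun p : SigmaPlus κ₀ × SigmaPlus κ₀ => (p.1.1, p.2.1))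
        (𝓤 (ℕ → Fin κ₀)) := rfl
    rw [this, hPi, Filter.comap_iInf]
    simp only [Filter.comap_principal]
    apply le_antisymm
    · refine le_iInf fun m => ?_
      have : V κ₀ m = ⋂ i ∈ Finset.range m,
          {p : SigmaPlus κ₀ × SigmaPlus κ₀ | p.1.1 i = p.2.1 i} := by
        ext p; simp [V]
      rw [Filter.le_principal_iff, this]
      exact (Filter.biInter_mem (Finset.range m).finite_toSet).2
        fun i _ => Filter.mem_iInf_of_mem i (Filter.mem_principal_self _)
    · refine le_iInf fun i => ?_
      refine le_trans (iInf_le _ (i + 1)) (Filter.principal_mono.2 fun p hp => hp i (by omega))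
  rw [hX]
  exact Filter.hasBasis_iInf_principal (V_antitone κ₀).directed_ge

/-! ### Iterates of the shift and dynamical entourages -/

lemma shift_iterate (κ₀ : ℕ) (ξ : SigmaPlus κ₀) (k j : ℕ) :
    ((shift κ₀)^[k] ξ).1 j = ξ.1 (j + k) := by
  induction k generalizing ξ with
  | zero => rfl
  | succ k ih =>
    rw [Function.iterate_succ_apply, ih (shift κ₀ ξ)]
    show ξ.1 (j + k + 1) = ξ.1 (j + (k + 1))
    ring_nf

lemma mem_dynEntourage_V {m n : ℕ} {x y : SigmaPlus κ₀} :
    (x, y) ∈ Dynamics.dynEntourage (shift κ₀) (V κ₀ m) n ↔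
      ∀ k < n, ∀ i < m, x.1 (i + k) = y.1 (i + k) := by
  rw [Dynamics.mem_dynEntourage]
  constructor
  · intro h k hk i hi
    have := h k hk i hi
    rwa [shift_iterate, shift_iterate] at this
  · intro h k hk i hi
    rw [shift_iterate, shift_iterate]
    exact h k hk i hi

/-! ### Counting bounds for dynamical covers -/

/-- extend a finite word of increments by zeros -/
def extv (hκ : 3 ≤ κ₀) {L : ℕ} (v : Fin L → Fin (κ₀ - 1)) : ℕ → Fin (κ₀ - 1) :=
  fun j => if h : j < L then v ⟨j, h⟩ else ⟨0, by omega⟩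

lemma extv_lt (hκ : 3 ≤ κ₀) {L : ℕ} (v : Fin L → Fin (κ₀ - 1)) {i : ℕ} (hi : i < L) :
    extv hκ v i = v ⟨i, hi⟩ := dif_pos hi

open Dynamics UniformSpace in
lemma coverMincard_le (hκ : 3 ≤ κ₀) (m n : ℕ) (hm : 1 ≤ m) (hn : 1 ≤ n) :
    coverMincard (shift κ₀) Set.univ (V κ₀ m) n ≤ ((κ₀ * (κ₀ - 1) ^ (n + m) : ℕ) : ℕ∞) := by
  classical
  have hκ0 : 0 < κ₀ := by omega
  let f : Fin κ₀ × (Fin (n + m) → Fin (κ₀ - 1)) → SigmaPlus κ₀ :=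
    fun p => Dx hκ0 p.1 (extv hκ p.2)
  have hcover : IsDynCoverOf (shift κ₀) Set.univ (V κ₀ m) n (Finset.image f Finset.univ) := by
    intro ξ _
    obtain ⟨a, v, rfl⟩ := exists_decode hκ0 ξ
    refine ⟨f (a, fun i => v i.1), ?_, ?_⟩
    · exact Finset.mem_coe.2 (Finset.mem_image_of_mem _ (Finset.mem_univ _))
    · show (Dx hκ0 a v, f (a, fun i => v i.1)) ∈ dynEntourage (shift κ₀) (V κ₀ m) n
      refine mem_dynEntourage_V.2 fun k hk i hi => ?_
      show D hκ0 a v (i + k) = D hκ0 a (extv hκ fun i => v i.1) (i + k)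
      refine Eq.symm <| D_congr hκ0 a (L := n + m) (fun i' hi' => ?_) (i + k) (by omega)
      rw [extv_lt hκ _ hi']
  refine hcover.coverMincard_le_card.trans ?_
  rw [Nat.cast_le]
  refine Finset.card_image_le.trans ?_
  simp [Fintype.card_fun]

open Dynamics UniformSpace in
lemma le_coverMincard (hκ : 3 ≤ κ₀) (n : ℕ) :
    (((κ₀ - 1) ^ n : ℕ) : ℕ∞) ≤ coverMincard (shift κ₀) Set.univ (V κ₀ 1) (n + 1) := by
  classical
  have hκ0 : 0 < κ₀ := by omega
  refine le_iInf₂ fun s hs => ?_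
  have choice : ∀ v : Fin n → Fin (κ₀ - 1), ∃ x, x ∈ s ∧
      (x, Dx hκ0 ⟨0, hκ0⟩ (extv hκ v)) ∈ dynEntourage (shift κ₀) (V κ₀ 1) (n + 1) := by
    intro v
    have := hs (Set.mem_univ (Dx hκ0 ⟨0, hκ0⟩ (extv hκ v)))
    rcases this with ⟨x, hx, hball⟩
    exact ⟨x, Finset.mem_coe.1 hx,
      mem_dynEntourage_V.2 fun k hk i hi => ((mem_dynEntourage_V.1 hball) k hk i hi).symm⟩
  choose g hg1 hg2 using choice
  have ginj : Function.Injective g := by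
    intro v w hvw
    have h1 := hg2 v
    have h2 := hg2 w
    rw [hvw] at h1
    have hagree : ∀ j ≤ n, D hκ0 ⟨0, hκ0⟩ (extv hκ v) j = D hκ0 ⟨0, hκ0⟩ (extv hκ w) j := by
      intro j hj
      have e1 := (mem_dynEntourage_V.1 h1) j (by omega) 0 (by omega)
      have e2 := (mem_dynEntourage_V.1 h2) j (by omega) 0 (by omega)
      have e3 : (Dx hκ0 ⟨0, hκ0⟩ (extv hκ v)).1 (0 + j) = (Dx hκ0 ⟨0, hκ0⟩ (extv hκ w)).1 (0 + j) :=
        e1.symm.trans e2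
      simpa [Dx] using e3
    funext i
    have := (D_inj hκ0 hagree).2 i.1 i.2
    rw [extv_lt hκ v i.2, extv_lt hκ w i.2] at this
    simpa using this
  let g' : (Fin n → Fin (κ₀ - 1)) → {x // x ∈ s} := fun v => ⟨g v, hg1 v⟩
  have g'inj : Function.Injective g' := fun v w h => ginj (congrArg Subtype.val h)
  have hcard := Fintype.card_le_of_injective g' g'inj
  rw [Fintype.card_fun, Fintype.card_fin, Fintype.card_fin, Fintype.card_coe] at hcard
  exact_mod_cast hcard

/-! ### Limit computations -/

lemma ereal_log_div (K n : ℕ) (hK : 0 < K) :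
    ENNReal.log ((K : ℝ≥0∞)) / (n : EReal) = ((Real.log K / (n : ℝ) : ℝ) : EReal) := by
  rw [← ENNReal.ofReal_natCast, ENNReal.log_ofReal_of_pos (by exact_mod_cast hK),
    ← EReal.coe_coe_eq_natCast, ← EReal.coe_div]

lemma tendsto_upper (a c : ℝ) (m : ℕ) :
    Filter.Tendsto (fun n : ℕ => (a + ((n + m : ℕ) : ℝ) * c) / n) Filter.atTop (nhds c) := by
  have h : Filter.Tendsto (fun n : ℕ => (a + (m : ℝ) * c) * ((n : ℝ))⁻¹ + c)
      Filter.atTop (nhds ((a + (m : ℝ) * c) * 0 + c)) :=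
    (tendsto_inv_atTop_nhds_zero_nat.const_mul _).add tendsto_const_nhds
  rw [mul_zero, zero_add] at h
  refine h.congr' ?_
  filter_upwards [Filter.eventually_ge_atTop 1] with n hn
  have hn' : (n : ℝ) ≠ 0 := by positivity
  push_cast
  field_simp
  ring

lemma tendsto_lower (c : ℝ) :
    Filter.Tendsto (fun n : ℕ => (((n - 1 : ℕ) : ℝ) * c) / n) Filter.atTop (nhds c) := by
  have h : Filter.Tendsto (fun n : ℕ => (-c) * ((n : ℝ))⁻¹ + c)
      Filter.atTop (nhds ((-c) * 0 + c)) :=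
    (tendsto_inv_atTop_nhds_zero_nat.const_mul _).add tendsto_const_nhds
  rw [mul_zero, zero_add] at h
  refine h.congr' ?_
  filter_upwards [Filter.eventually_ge_atTop 1] with n hn
  have hn' : (n : ℝ) ≠ 0 := by positivity
  rw [Nat.cast_sub hn]
  push_cast
  field_simp
  ring

/-! ### Entropy bounds -/

open Dynamics in
lemma entropy_le (hκ : 3 ≤ κ₀) (m : ℕ) :
    coverEntropyEntourage (shift κ₀) Set.univ (V κ₀ m) ≤
      ((Real.log ((κ₀ : ℝ) - 1) : ℝ) : EReal) := by
  have hstep : ∀ m' : ℕ, 1 ≤ m' → coverEntropyEntourage (shift κ₀) Set.univ (V κ₀ m') ≤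
      ((Real.log ((κ₀ : ℝ) - 1) : ℝ) : EReal) := by
    intro m' hm'
    set c := Real.log ((κ₀ : ℝ) - 1) with hc
    set b : ℕ → EReal := fun n => ((Real.log ((κ₀ * (κ₀ - 1) ^ (n + m') : ℕ) : ℝ) / (n : ℝ) : ℝ) : EReal)
      with hb
    have hbound : ∀ n : ℕ, 1 ≤ n →
        coverEntropyEntourage (shift κ₀) Set.univ (V κ₀ m') ≤ b n := by
      intro n hn
      have h1 : coverEntropyEntourage (shift κ₀) Set.univ (V κ₀ m') ≤
          ENNReal.log (coverMincard (shift κ₀) Set.univ (V κ₀ m') n) / (n : EReal) := by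
        conv_lhs => rw [← V_comp κ₀ m']
        haveI := V_symm κ₀ m'
        exact coverEntropyEntourage_le_log_coverMincard_div (Set.mapsTo_univ _ _)
          (by omega)
      refine h1.trans ?_
      have h2 : ENNReal.log (coverMincard (shift κ₀) Set.univ (V κ₀ m') n) ≤
          ENNReal.log (((κ₀ * (κ₀ - 1) ^ (n + m') : ℕ) : ℝ≥0∞)) := by
        apply ENNReal.log_monotone
        have := coverMincard_le hκ m' n hm' hn
        exact_mod_cast ENat.toENNReal_mono this
      have h3 : ENNReal.log (coverMincard (shift κ₀) Set.univ (V κ₀ m') n) / (n : EReal) ≤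
          ENNReal.log (((κ₀ * (κ₀ - 1) ^ (n + m') : ℕ) : ℝ≥0∞)) / (n : EReal) :=
        EReal.monotone_div_right_of_nonneg (Nat.cast_nonneg' n) h2
      exact h3.trans_eq (ereal_log_div _ n (Nat.mul_pos (by omega) (pow_pos (by omega) _)))
    have htend : Filter.Tendsto b Filter.atTop (nhds ((c : ℝ) : EReal)) := by
      rw [hb]
      refine EReal.tendsto_coe.2 ?_
      have heq : ∀ n : ℕ, Real.log ((κ₀ * (κ₀ - 1) ^ (n + m') : ℕ) : ℝ) =
          Real.log κ₀ + ((n + m' : ℕ) : ℝ) * c := by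
        intro n
        have hpos : (0 : ℝ) < ((κ₀ - 1 : ℕ) : ℝ) := by
          exact_mod_cast Nat.sub_pos_of_lt (by omega)
        push_cast [Nat.cast_mul, Nat.cast_pow]
        rw [Real.log_mul (by positivity) (pow_ne_zero _ (ne_of_gt hpos)), Real.log_pow, hc,
          Nat.cast_sub (by omega : 1 ≤ κ₀), Nat.cast_one]
        push_cast
        ring
      simp only [heq]
      exact tendsto_upper (Real.log κ₀) c m'
    exact ge_of_tendsto htend (Filter.eventually_atTop.2 ⟨1, fun n hn => hbound n hn⟩)
  calc coverEntropyEntourage (shift κ₀) Set.univ (V κ₀ m)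
      ≤ coverEntropyEntourage (shift κ₀) Set.univ (V κ₀ (m + 1)) :=
        coverEntropyEntourage_antitone (shift κ₀) Set.univ (V_antitone κ₀ (by omega))
    _ ≤ _ := hstep (m + 1) (by omega)

open Dynamics in
lemma le_entropy (hκ : 3 ≤ κ₀) :
    ((Real.log ((κ₀ : ℝ) - 1) : ℝ) : EReal) ≤
      coverEntropyEntourage (shift κ₀) Set.univ (V κ₀ 1) := by
  set c := Real.log ((κ₀ : ℝ) - 1) with hc
  set g : ℕ → EReal := fun n => (((((n - 1 : ℕ) : ℝ)) * c / (n : ℝ) : ℝ) : EReal) with hg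
  have hgf : g ≤ᶠ[Filter.atTop] fun n : ℕ =>
      ENNReal.log (coverMincard (shift κ₀) Set.univ (V κ₀ 1) n) / (n : EReal) := by
    filter_upwards [Filter.eventually_ge_atTop 1] with n hn
    have h1 : (((κ₀ - 1) ^ (n - 1) : ℕ) : ℝ≥0∞) ≤
        (coverMincard (shift κ₀) Set.univ (V κ₀ 1) n : ℝ≥0∞) := by
      have := le_coverMincard hκ (n - 1)
      rw [Nat.sub_add_cancel hn] at this
      exact_mod_cast ENat.toENNReal_mono this
    have h2 : ENNReal.log ((((κ₀ - 1) ^ (n - 1) : ℕ) : ℝ≥0∞)) / (n : EReal) ≤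
        ENNReal.log (coverMincard (shift κ₀) Set.univ (V κ₀ 1) n) / (n : EReal) :=
      EReal.monotone_div_right_of_nonneg (Nat.cast_nonneg' n) (ENNReal.log_monotone h1)
    refine le_trans (le_of_eq ?_) h2
    have hpos : (0 : ℝ) < ((κ₀ - 1 : ℕ) : ℝ) := by
      exact_mod_cast Nat.sub_pos_of_lt (by omega)
    rw [ereal_log_div _ n (pow_pos (by omega : 0 < κ₀ - 1) _), hg]
    congr 2
    push_cast [Nat.cast_pow]
    rw [Real.log_pow, hc, Nat.cast_sub (by omega : 1 ≤ κ₀), Nat.cast_one]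
  have hgt : Filter.Tendsto g Filter.atTop (nhds ((c : ℝ) : EReal)) :=
    EReal.tendsto_coe.2 (tendsto_lower c)
  calc ((c : ℝ) : EReal) = Filter.atTop.limsup g := (hgt.limsup_eq).symm
    _ ≤ _ := Filter.limsup_le_limsup hgf

end ShiftAux

open ShiftAux in
/-- `Σ_A^+` is compact, the shift `σ` is continuous, and the topological (cover)
entropy of `σ : Σ_A^+ → Σ_A^+` equals `log (κ₀ - 1)`. -/
theorem shift_compact_continuous_entropy (κ₀ : ℕ) (hκ : 3 ≤ κ₀) :
    CompactSpace (SigmaPlus κ₀) ∧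
    Continuous (shift κ₀) ∧
    Dynamics.coverEntropy (shift κ₀) (Set.univ : Set (SigmaPlus κ₀)) =
      ((Real.log ((κ₀ : ℝ) - 1) : ℝ) : EReal) := by
  refine ⟨?_, ?_, ?_⟩
  · have hcl : IsClosed {ξ : ℕ → Fin κ₀ | ∀ j : ℕ, ξ j ≠ ξ (j + 1)} := by
      have : {ξ : ℕ → Fin κ₀ | ∀ j : ℕ, ξ j ≠ ξ (j + 1)} =
          ⋂ j : ℕ, {ξ : ℕ → Fin κ₀ | ξ j ≠ ξ (j + 1)} := by
        ext ξ; simp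
      rw [this]
      refine isClosed_iInter fun j => ?_
      have : {ξ : ℕ → Fin κ₀ | ξ j ≠ ξ (j + 1)} =
          (fun ξ : ℕ → Fin κ₀ => (ξ j, ξ (j + 1))) ⁻¹' {p : Fin κ₀ × Fin κ₀ | p.1 ≠ p.2} := rfl
      rw [this]
      exact (isClosed_discrete _).preimage ((continuous_apply j).prodMk (continuous_apply (j + 1)))
    exact isCompact_iff_compactSpace.1 hcl.isCompact
  · refine continuous_induced_rng.2 ?_
    exact continuous_pi fun j => (continuous_apply (j + 1)).comp continuous_subtype_val
  · rw [Dynamics.coverEntropy_eq_iSup_basis (hasBasis_uniformity κ₀) (shift κ₀) Set.univ]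
    apply le_antisymm
    · exact iSup₂_le fun m _ => entropy_le hκ m
    · exact le_trans (le_entropy hκ) (le_iSup₂ (f := fun (m : ℕ) (_ : True) =>
        Dynamics.coverEntropyEntourage (shift κ₀) Set.univ (V κ₀ m)) 1 trivial)
end

section
/- Let f : Σ_A^+ → ℝ, set h₀ = log(κ₀ − 1), and define F(x,y) = f(x) − f(y) on Σ_A^+ × Σ_A^+ with the product shift σ̄(x,y) = (σx,σy) and associated Ruelle operator L̄. Suppose there exist C > 0 and ρ₁ ∈ (0,1) such that for every real t with |t| ≥ e, every integer p ≥ 0 and every integer l with 0 ≤ l ≤ ⌊log|t|⌋ − 1, one has ‖L_{itf − h₀}^{p⌊log|t|⌋ + l} 1‖_∞ ≤ C^{1/2}·ρ₁^{p⌊log|t|⌋}, where ‖·‖_∞ is the supremum norm. Then there exist C' > 0, ρ ∈ (0,1) and α > 0 such that for every t with |t| ≥ e and every n ≥ 1: ‖L̄_{itF}^n 1‖_∞ ≤ C'·e^{2h₀ n}·min(ρ^n |t|^α, 1). -/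
/-- The product shift `σ̄(x,y) = (σ x, σ y)` on `Σ_A^+ × Σ_A^+`. -/
def prodShift (κ₀ : ℕ) : SigmaPlus κ₀ × SigmaPlus κ₀ → SigmaPlus κ₀ × SigmaPlus κ₀ :=
  fun p => (shift κ₀ p.1, shift κ₀ p.2)

/-- The Ruelle transfer operator of a potential `ψ` for a map `T`:
`(L_ψ u)(x) = Σ_{y : T y = x} e^{ψ(y)} u(y)` (a finite sum over the fiber). -/
noncomputable def RuelleOp {X : Type*} (T : X → X) (ψ : X → ℂ) (u : X → ℂ) : X → ℂ :=
  fun x => ∑ᶠ y ∈ {y : X | T y = x}, Complex.exp (ψ y) * u y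

namespace DolgAux

variable {κ₀ : ℕ}

lemma sigma_nonempty (hκ : 3 ≤ κ₀) : Nonempty (SigmaPlus κ₀) := by
  refine ⟨⟨fun j => ⟨j % 2, by omega⟩, fun j => ?_⟩⟩
  simp only [ne_eq, Fin.mk.injEq]
  omega

lemma fiber_injOn (x : SigmaPlus κ₀) :
    Set.InjOn (fun η : SigmaPlus κ₀ => η.1 0) {η | shift κ₀ η = x} := by
  intro η hη η' hη' h
  simp only [Set.mem_setOf_eq] at hη hη'
  apply Subtype.ext; funext j
  cases j with
  | zero => exact h
  | succ j =>
    have h1 : η.1 (j + 1) = x.1 j := congrArg (fun z : SigmaPlus κ₀ => z.1 j) hη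
    have h2 : η'.1 (j + 1) = x.1 j := congrArg (fun z : SigmaPlus κ₀ => z.1 j) hη'
    rw [h1, h2]

lemma fiber_finite (x : SigmaPlus κ₀) : {η : SigmaPlus κ₀ | shift κ₀ η = x}.Finite :=
  Set.Finite.of_finite_image (Set.toFinite _) (fiber_injOn x)

lemma fiber_card (x : SigmaPlus κ₀) : (fiber_finite x).toFinset.card ≤ κ₀ := by
  have := Finset.card_le_card_of_injOn (s := (fiber_finite x).toFinset)
    (t := (Finset.univ : Finset (Fin κ₀)))
    (fun η : SigmaPlus κ₀ => η.1 0) (fun a _ => Finset.mem_univ _)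
    (fun a ha b hb hab =>
      fiber_injOn x (by simpa using ha) (by simpa using hb) hab)
  simpa using this

lemma ruelle_apply (ψ u : SigmaPlus κ₀ → ℂ) (x : SigmaPlus κ₀) :
    RuelleOp (shift κ₀) ψ u x
      = ∑ η ∈ (fiber_finite x).toFinset, Complex.exp (ψ η) * u η := by
  rw [RuelleOp, finsum_mem_eq_finite_toFinset_sum _ (fiber_finite x)]


lemma ruelle_bound (ψ u : SigmaPlus κ₀ → ℂ) (M : ℝ) (hM : 0 ≤ M)
    (hψ : ∀ η, ‖Complex.exp (ψ η)‖ ≤ 1)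
    (hu : ∀ η, ‖u η‖ ≤ M) (x : SigmaPlus κ₀) :
    ‖RuelleOp (shift κ₀) ψ u x‖ ≤ κ₀ * M := by
  rw [ruelle_apply]
  calc ‖∑ η ∈ (fiber_finite x).toFinset, Complex.exp (ψ η) * u η‖
      ≤ ∑ η ∈ (fiber_finite x).toFinset, ‖Complex.exp (ψ η) * u η‖ := by
        exact norm_sum_le _ _
    _ ≤ ∑ _η ∈ (fiber_finite x).toFinset, M := by
        refine Finset.sum_le_sum fun η _ => ?_
        rw [norm_mul]
        calc ‖Complex.exp (ψ η)‖ * ‖u η‖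
            ≤ 1 * M := mul_le_mul (hψ η) (hu η) (norm_nonneg _) zero_le_one
          _ = M := one_mul M
    _ = (fiber_finite x).toFinset.card * M := by rw [Finset.sum_const, nsmul_eq_mul]
    _ ≤ κ₀ * M := by
        have := fiber_card x
        exact mul_le_mul_of_nonneg_right (by exact_mod_cast this) hM

lemma iter_bound (ψ : SigmaPlus κ₀ → ℂ)
    (hψ : ∀ η, ‖Complex.exp (ψ η)‖ ≤ 1) (n : ℕ) (x : SigmaPlus κ₀) :
    ‖(RuelleOp (shift κ₀) ψ)^[n] (fun _ => (1:ℂ)) x‖ ≤ (κ₀ : ℝ) ^ n := by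
  induction n generalizing x with
  | zero => simp
  | succ n ih =>
    rw [Function.iterate_succ_apply']
    calc ‖RuelleOp (shift κ₀) ψ ((RuelleOp (shift κ₀) ψ)^[n] fun _ => (1:ℂ)) x‖
        ≤ κ₀ * (κ₀ : ℝ) ^ n :=
          ruelle_bound _ _ _ (pow_nonneg (Nat.cast_nonneg _) _) hψ ih x
      _ = (κ₀ : ℝ) ^ (n + 1) := (pow_succ' _ _).symm

lemma ruelle_smul (ψ u : SigmaPlus κ₀ → ℂ) (a : ℂ) (x : SigmaPlus κ₀) :
    RuelleOp (shift κ₀) ψ (fun z => a * u z) x = a * RuelleOp (shift κ₀) ψ u x := by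
  rw [ruelle_apply, ruelle_apply, Finset.mul_sum]
  exact Finset.sum_congr rfl fun η _ => by ring

lemma ruelle_const_sub (ψ u : SigmaPlus κ₀ → ℂ) (c : ℂ) (x : SigmaPlus κ₀) :
    RuelleOp (shift κ₀) ψ u x
      = Complex.exp c * RuelleOp (shift κ₀) (fun η => ψ η - c) u x := by
  rw [ruelle_apply, ruelle_apply, Finset.mul_sum]
  refine Finset.sum_congr rfl fun η _ => ?_
  rw [← mul_assoc, ← Complex.exp_add]
  congr 2
  ring

lemma iter_const_sub (ψ : SigmaPlus κ₀ → ℂ) (c : ℂ) (n : ℕ) (x : SigmaPlus κ₀) :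
    (RuelleOp (shift κ₀) ψ)^[n] (fun _ => (1:ℂ)) x
      = Complex.exp c ^ n
        * (RuelleOp (shift κ₀) (fun η => ψ η - c))^[n] (fun _ => (1:ℂ)) x := by
  induction n generalizing x with
  | zero => simp
  | succ n ih =>
    rw [Function.iterate_succ_apply', Function.iterate_succ_apply']
    have : (RuelleOp (shift κ₀) ψ)^[n] (fun _ => (1:ℂ))
        = fun z => Complex.exp c ^ n
            * (RuelleOp (shift κ₀) (fun η => ψ η - c))^[n] (fun _ => (1:ℂ)) z :=
      funext fun z => ih z
    rw [this, ruelle_smul, ruelle_const_sub ψ _ c]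
    ring

lemma prod_fiber (x y : SigmaPlus κ₀) :
    {q : SigmaPlus κ₀ × SigmaPlus κ₀ | prodShift κ₀ q = (x, y)}
      = {η | shift κ₀ η = x} ×ˢ {η | shift κ₀ η = y} := by
  ext ⟨a, b⟩
  simp [prodShift, Prod.ext_iff]

lemma ruelle_prod (ψ₁ ψ₂ u v : SigmaPlus κ₀ → ℂ) (x y : SigmaPlus κ₀) :
    RuelleOp (prodShift κ₀) (fun q => ψ₁ q.1 + ψ₂ q.2) (fun q => u q.1 * v q.2) (x, y)
      = RuelleOp (shift κ₀) ψ₁ u x * RuelleOp (shift κ₀) ψ₂ v y := by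
  rw [RuelleOp]
  have hfin : ({η | shift κ₀ η = x} ×ˢ {η | shift κ₀ η = y} :
      Set (SigmaPlus κ₀ × SigmaPlus κ₀)).Finite :=
    (fiber_finite x).prod (fiber_finite y)
  rw [show {q : SigmaPlus κ₀ × SigmaPlus κ₀ | prodShift κ₀ q = (x, y)}
      = {η | shift κ₀ η = x} ×ˢ {η | shift κ₀ η = y} from prod_fiber x y]
  rw [finsum_mem_eq_finite_toFinset_sum _ hfin]
  rw [show hfin.toFinset = (fiber_finite x).toFinset ×ˢ (fiber_finite y).toFinset from
    (Set.Finite.toFinset_prod _ _).symm]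
  rw [Finset.sum_product, ruelle_apply, ruelle_apply, Finset.sum_mul_sum]
  refine Finset.sum_congr rfl fun a _ => Finset.sum_congr rfl fun b _ => ?_
  rw [Complex.exp_add]
  ring

lemma iter_prod (ψ₁ ψ₂ : SigmaPlus κ₀ → ℂ) (n : ℕ) (x y : SigmaPlus κ₀) :
    (RuelleOp (prodShift κ₀) (fun q => ψ₁ q.1 + ψ₂ q.2))^[n] (fun _ => (1:ℂ)) (x, y)
      = (RuelleOp (shift κ₀) ψ₁)^[n] (fun _ => (1:ℂ)) x
        * (RuelleOp (shift κ₀) ψ₂)^[n] (fun _ => (1:ℂ)) y := by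
  induction n generalizing x y with
  | zero => simp
  | succ n ih =>
    rw [Function.iterate_succ_apply', Function.iterate_succ_apply',
      Function.iterate_succ_apply']
    have : (RuelleOp (prodShift κ₀) (fun q => ψ₁ q.1 + ψ₂ q.2))^[n] (fun _ => (1:ℂ))
        = fun q : SigmaPlus κ₀ × SigmaPlus κ₀ =>
            (RuelleOp (shift κ₀) ψ₁)^[n] (fun _ => (1:ℂ)) q.1
              * (RuelleOp (shift κ₀) ψ₂)^[n] (fun _ => (1:ℂ)) q.2 :=
      funext fun q => ih q.1 q.2
    rw [this, ruelle_prod]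

end DolgAux

/-- Dolgopyat-type estimates for `L_{itf - h₀}` imply the bound
`‖L̄_{itF}^n 1‖_∞ ≤ C'·e^{2 h₀ n}·min(ρ^n |t|^α, 1)` for the Ruelle operator of
`F(x,y) = f(x) - f(y)` on the product shift space, where `h₀ = log (κ₀ - 1)`. -/
theorem dolgopyat_product_estimate (κ₀ : ℕ) (hκ : 3 ≤ κ₀)
    (f : SigmaPlus κ₀ → ℝ)
    (C : ℝ) (hC : 0 < C) (ρ₁ : ℝ) (hρ₁ : ρ₁ ∈ Set.Ioo (0 : ℝ) 1)
    (hyp : ∀ t : ℝ, Real.exp 1 ≤ |t| → ∀ p l : ℕ,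
      l ≤ ⌊Real.log |t|⌋₊ - 1 →
      (⨆ ξ : SigmaPlus κ₀,
        ‖((RuelleOp (shift κ₀)
          (fun η => Complex.I * t * (f η : ℂ) - (Real.log ((κ₀ : ℝ) - 1) : ℂ)))^[
            p * ⌊Real.log |t|⌋₊ + l] (fun _ => (1 : ℂ)) ξ)‖) ≤
        Real.sqrt C * ρ₁ ^ (p * ⌊Real.log |t|⌋₊)) :
    ∃ C' : ℝ, 0 < C' ∧ ∃ ρ ∈ Set.Ioo (0 : ℝ) 1, ∃ α : ℝ, 0 < α ∧
      ∀ t : ℝ, Real.exp 1 ≤ |t| → ∀ n : ℕ, 1 ≤ n →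
        (⨆ p : SigmaPlus κ₀ × SigmaPlus κ₀,
          ‖((RuelleOp (prodShift κ₀)
            (fun q => Complex.I * t * ((f q.1 : ℂ) - (f q.2 : ℂ))))^[n]
            (fun _ => (1 : ℂ)) p)‖) ≤
          C' * Real.exp (2 * Real.log ((κ₀ : ℝ) - 1) * n) *
            min (ρ ^ n * |t| ^ α) 1 := by
  obtain ⟨hρ₁0, hρ₁1⟩ := hρ₁
  haveI : Nonempty (SigmaPlus κ₀) := DolgAux.sigma_nonempty hκ
  have hκℝ : (3:ℝ) ≤ (κ₀:ℝ) := by exact_mod_cast hκ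
  set h₀ := Real.log ((κ₀:ℝ) - 1) with hh₀
  have hh₀0 : 0 ≤ h₀ := Real.log_nonneg (by linarith)
  have hlogρ : Real.log ρ₁ < 0 := Real.log_neg hρ₁0 hρ₁1
  have hα : 0 < -(2 * Real.log ρ₁) := by linarith
  refine ⟨C, hC, ρ₁ ^ 2, ⟨pow_pos hρ₁0 2, pow_lt_one₀ hρ₁0.le hρ₁1 two_ne_zero⟩,
    -(2 * Real.log ρ₁), hα, ?_⟩
  intro t ht n hn
  have ht0 : (0:ℝ) < |t| := lt_of_lt_of_le (Real.exp_pos 1) ht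
  have hlogt : 1 ≤ Real.log |t| := by
    calc (1:ℝ) = Real.log (Real.exp 1) := (Real.log_exp 1).symm
      _ ≤ Real.log |t| := Real.log_le_log (Real.exp_pos 1) ht
  set N := ⌊Real.log |t|⌋₊ with hNdef
  have hN1 : 1 ≤ N := Nat.le_floor (by exact_mod_cast hlogt)
  have hNle : (N:ℝ) ≤ Real.log |t| := Nat.floor_le (by linarith)
  set p := n / N with hpdef
  set l := n % N with hldef
  have hlN : l < N := Nat.mod_lt _ (by omega)
  have hpl : p * N + l = n := by rw [mul_comm]; exact Nat.div_add_mod n N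
  -- pointwise bound from the hypothesis
  have key : ∀ s : ℝ, |s| = |t| → ∀ ξ : SigmaPlus κ₀,
      ‖(RuelleOp (shift κ₀)
          (fun η => Complex.I * s * (f η : ℂ) - (h₀ : ℂ)))^[n] (fun _ => (1:ℂ)) ξ‖
        ≤ Real.sqrt C * ρ₁ ^ (p * N) := by
    intro s hs ξ
    have hψ : ∀ η, ‖Complex.exp
        (Complex.I * s * (f η : ℂ) - (h₀ : ℂ))‖ ≤ 1 := by
      intro η
      rw [Complex.norm_exp]
      have hre : (Complex.I * s * (f η : ℂ) - (h₀ : ℂ)).re = -h₀ := by simp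
      rw [hre]
      exact Real.exp_le_one_iff.2 (by linarith)
    have hbdd : BddAbove (Set.range fun ζ : SigmaPlus κ₀ =>
        ‖(RuelleOp (shift κ₀)
          (fun η => Complex.I * s * (f η : ℂ) - (h₀ : ℂ)))^[n] (fun _ => (1:ℂ)) ζ‖) := by
      refine ⟨(κ₀:ℝ) ^ n, ?_⟩
      rintro _ ⟨ζ, rfl⟩
      exact DolgAux.iter_bound _ hψ n ζ
    have hle := le_ciSup hbdd ξ
    have hhyp := hyp s (by rw [hs]; exact ht) p l (by rw [hs, ← hNdef]; omega)
    rw [hs, ← hNdef, hpl] at hhyp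
    exact hle.trans hhyp
  refine ciSup_le ?_
  rintro ⟨x, y⟩
  have hpot : (fun q : SigmaPlus κ₀ × SigmaPlus κ₀ =>
      Complex.I * t * ((f q.1 : ℂ) - (f q.2 : ℂ)))
      = fun q => (Complex.I * t * (f q.1 : ℂ)) + (Complex.I * (-t:ℝ) * (f q.2 : ℂ)) := by
    funext q; push_cast; ring
  have hsplit2 := DolgAux.iter_prod (κ₀ := κ₀)
    (fun η => Complex.I * t * (f η : ℂ))
    (fun η => Complex.I * (-t:ℝ) * (f η : ℂ)) n x y
  rw [hpot, hsplit2, norm_mul]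
  have hx : ‖(RuelleOp (shift κ₀)
      (fun η => Complex.I * t * (f η : ℂ)))^[n] (fun _ => (1:ℂ)) x‖
      ≤ Real.exp h₀ ^ n * (Real.sqrt C * ρ₁ ^ (p * N)) := by
    rw [DolgAux.iter_const_sub (fun η => Complex.I * t * (f η : ℂ)) (h₀ : ℂ) n x,
      norm_mul, norm_pow, Complex.norm_exp, Complex.ofReal_re]
    exact mul_le_mul_of_nonneg_left (key t rfl x) (by positivity)
  have hy : ‖(RuelleOp (shift κ₀)
      (fun η => Complex.I * (-t:ℝ) * (f η : ℂ)))^[n] (fun _ => (1:ℂ)) y‖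
      ≤ Real.exp h₀ ^ n * (Real.sqrt C * ρ₁ ^ (p * N)) := by
    rw [DolgAux.iter_const_sub (fun η => Complex.I * (-t:ℝ) * (f η : ℂ)) (h₀ : ℂ) n y,
      norm_mul, norm_pow, Complex.norm_exp, Complex.ofReal_re]
    exact mul_le_mul_of_nonneg_left (key (-t) (abs_neg t) y) (by positivity)
  have hprod : ‖(RuelleOp (shift κ₀)
        (fun η => Complex.I * t * (f η : ℂ)))^[n] (fun _ => (1:ℂ)) x‖
      * ‖(RuelleOp (shift κ₀)
        (fun η => Complex.I * (-t:ℝ) * (f η : ℂ)))^[n] (fun _ => (1:ℂ)) y‖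
      ≤ (Real.exp h₀ ^ n * (Real.sqrt C * ρ₁ ^ (p * N)))
        * (Real.exp h₀ ^ n * (Real.sqrt C * ρ₁ ^ (p * N))) :=
    mul_le_mul hx hy (norm_nonneg _) (by positivity)
  refine hprod.trans ?_
  have hE : Real.exp h₀ ^ n * Real.exp h₀ ^ n = Real.exp (2 * h₀ * n) := by
    rw [← Real.exp_nat_mul, ← Real.exp_add]
    congr 1; ring
  have hCC : Real.sqrt C * Real.sqrt C = C := Real.mul_self_sqrt hC.le
  have heq : (Real.exp h₀ ^ n * (Real.sqrt C * ρ₁ ^ (p * N)))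
        * (Real.exp h₀ ^ n * (Real.sqrt C * ρ₁ ^ (p * N)))
      = Real.exp (2 * h₀ * n) * C * ((ρ₁ ^ 2) ^ (p * N)) := by
    have h2 : ((ρ₁ ^ 2 : ℝ)) ^ (p * N) = ρ₁ ^ (p * N) * ρ₁ ^ (p * N) := by
      rw [← pow_mul, two_mul, pow_add]
    calc (Real.exp h₀ ^ n * (Real.sqrt C * ρ₁ ^ (p * N)))
          * (Real.exp h₀ ^ n * (Real.sqrt C * ρ₁ ^ (p * N)))
        = (Real.exp h₀ ^ n * Real.exp h₀ ^ n) * (Real.sqrt C * Real.sqrt C)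
            * (ρ₁ ^ (p * N) * ρ₁ ^ (p * N)) := by ring
      _ = Real.exp (2 * h₀ * n) * C * ((ρ₁ ^ 2) ^ (p * N)) := by rw [hE, hCC, ← h2]
  rw [heq]
  have hkey2 : ((ρ₁ ^ 2 : ℝ)) ^ (p * N) ≤ min ((ρ₁ ^ 2) ^ n * |t| ^ (-(2 * Real.log ρ₁))) 1 := by
    refine le_min ?_ (pow_le_one₀ (by positivity) (by nlinarith))
    have hlle : (l : ℝ) ≤ Real.log |t| := by
      have : (l : ℝ) ≤ (N : ℝ) := by exact_mod_cast hlN.le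
      linarith
    have h1 : (1:ℝ) ≤ (ρ₁ ^ 2) ^ l * |t| ^ (-(2 * Real.log ρ₁)) := by
      have e1 : (ρ₁ ^ 2) ^ l = Real.exp ((2 * l : ℕ) * Real.log ρ₁) := by
        rw [← pow_mul, Real.exp_nat_mul, Real.exp_log hρ₁0]
      have e2 : |t| ^ (-(2 * Real.log ρ₁)) = Real.exp (Real.log |t| * (-(2 * Real.log ρ₁))) :=
        Real.rpow_def_of_pos ht0 _
      rw [e1, e2, ← Real.exp_add, ← Real.exp_zero]
      apply Real.exp_le_exp.2
      push_cast
      nlinarith [mul_nonneg (by linarith : (0:ℝ) ≤ -Real.log ρ₁)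
        (by linarith : (0:ℝ) ≤ Real.log |t| - (l:ℝ))]
    calc ((ρ₁ ^ 2 : ℝ)) ^ (p * N)
        ≤ (ρ₁ ^ 2) ^ (p * N) * ((ρ₁ ^ 2) ^ l * |t| ^ (-(2 * Real.log ρ₁))) :=
          le_mul_of_one_le_right (by positivity) h1
      _ = (ρ₁ ^ 2) ^ (p * N + l) * |t| ^ (-(2 * Real.log ρ₁)) := by
          rw [pow_add]; ring
      _ = (ρ₁ ^ 2) ^ n * |t| ^ (-(2 * Real.log ρ₁)) := by rw [hpl]
  calc Real.exp (2 * h₀ * n) * C * ((ρ₁ ^ 2) ^ (p * N))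
      ≤ Real.exp (2 * h₀ * n) * C * min ((ρ₁ ^ 2) ^ n * |t| ^ (-(2 * Real.log ρ₁))) 1 :=
        mul_le_mul_of_nonneg_left hkey2 (by positivity)
    _ = C * Real.exp (2 * h₀ * n) * min ((ρ₁ ^ 2) ^ n * |t| ^ (-(2 * Real.log ρ₁))) 1 := by
        ring
end
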